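/- arXiv:1707.08440 — 4 statements merged into one kernel-verified Lean document; each statement's English description precedes it below -/
import Mathlib

section
/- Let (G_f, G_g) be jointly Gaussian centered random variables with variances |f|², |g|² and covariance ⟨f,g⟩ arising from Wiener integrals δ(f), δ(g) of f, g ∈ L²([0,T]). Then for every p ≥ 1, ‖exp(δ(f)) − exp(δ(g))‖_{L^p} ≤ C·S_p(|f−g|), where S_p(λ) = λ·exp(p·λ²) + exp(λ²/2) − 1 and C depends only on p and |g|. -/
open MeasureTheory ProbabilityTheory Real
open scoped NNReal ENNReal

/-- `S_p(λ) = λ·exp(p·λ²) + exp(λ²/2) − 1`. -/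
noncomputable def Spoly (p l : ℝ) : ℝ :=
  l * Real.exp (p * l ^ 2) + Real.exp (l ^ 2 / 2) - 1

lemma lintegral_exp_mul_gaussianReal (t : ℝ) (v : ℝ≥0) :
    ∫⁻ x, ENNReal.ofReal (rexp (t * x)) ∂(gaussianReal 0 v)
      = ENNReal.ofReal (rexp (t ^ 2 * v / 2)) := by
  by_cases hv : v = 0
  · subst hv
    rw [gaussianReal_zero_var, lintegral_dirac' _ (by fun_prop)]
    simp
  · have hv' : (v : ℝ) ≠ 0 := by exact_mod_cast hv
    have h2v : (2 : ℝ) * v ≠ 0 := mul_ne_zero two_ne_zero hv'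
    rw [gaussianReal_of_var_ne_zero _ hv,
      lintegral_withDensity_eq_lintegral_mul _ (measurable_gaussianPDF _ _) (by fun_prop)]
    have hkey : ∀ x : ℝ, gaussianPDF 0 v x * ENNReal.ofReal (rexp (t * x))
        = ENNReal.ofReal (rexp (t ^ 2 * v / 2))
          * ENNReal.ofReal (gaussianPDFReal (t * v) v x) := by
      intro x
      rw [gaussianPDF, ← ENNReal.ofReal_mul (gaussianPDFReal_nonneg _ _ _),
        ← ENNReal.ofReal_mul (le_of_lt (exp_pos _))]
      congr 1
      simp only [gaussianPDFReal]
      have hexp : -(x - 0) ^ 2 / (2 * (v : ℝ)) + t * x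
          = t ^ 2 * v / 2 + -(x - t * v) ^ 2 / (2 * (v : ℝ)) := by
        field_simp
        ring
      rw [mul_assoc, ← Real.exp_add, hexp, Real.exp_add]
      ring
    simp only [Pi.mul_apply]
    simp only [hkey]
    rw [lintegral_const_mul _ (measurable_gaussianPDFReal _ _).ennreal_ofReal,
      lintegral_gaussianPDFReal_eq_one _ hv, mul_one]

lemma eLpNorm_exp_map_gaussian {Ω : Type} [MeasurableSpace Ω] (P : Measure Ω)
    (X : Ω → ℝ) (v : ℝ≥0) (hX : Measure.map X P = gaussianReal 0 v) {p : ℝ} (hp : 1 ≤ p) :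
    eLpNorm (fun ω => rexp (X ω)) (ENNReal.ofReal p) P
      = ENNReal.ofReal (rexp (p * v / 2)) := by
  have hp0 : 0 < p := lt_of_lt_of_le one_pos hp
  have hXm : AEMeasurable X P := aemeasurable_of_map_neZero (by rw [hX]; infer_instance)
  have hq0 : ENNReal.ofReal p ≠ 0 := by
    simp [ENNReal.ofReal_eq_zero, not_le, hp0]
  have hqt : ENNReal.ofReal p ≠ ⊤ := ENNReal.ofReal_ne_top
  rw [eLpNorm_eq_lintegral_rpow_enorm_toReal hq0 hqt, ENNReal.toReal_ofReal hp0.le]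
  simp only [enorm_eq_nnnorm]
  have h1 : ∀ ω, ((‖rexp (X ω)‖₊ : ℝ≥0∞)) ^ p = ENNReal.ofReal (rexp (p * X ω)) := by
    intro ω
    rw [← enorm_eq_nnnorm, Real.enorm_eq_ofReal (exp_pos _).le, ENNReal.ofReal_rpow_of_pos (exp_pos _),
      ← Real.exp_mul, mul_comm]
  simp only [h1]
  have h2 : ∫⁻ ω, ENNReal.ofReal (rexp (p * X ω)) ∂P
      = ENNReal.ofReal (rexp (p ^ 2 * v / 2)) := by
    have := lintegral_map' (μ := P) (g := X)
      (f := fun x => ENNReal.ofReal (rexp (p * x))) (by fun_prop) hXm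
    rw [← this, hX, lintegral_exp_mul_gaussianReal]
  rw [h2, ENNReal.ofReal_rpow_of_pos (exp_pos _), ← Real.exp_mul]
  congr 1
  field_simp

lemma abs_exp_sub_exp_le (x y : ℝ) : |rexp x - rexp y| ≤ |x - y| * (rexp x + rexp y) := by
  rcases le_total x y with h | h
  · have h1 := Real.add_one_le_exp (x - y)
    have h2 : rexp x = rexp y * rexp (x - y) := by rw [← Real.exp_add]; ring_nf
    have h3 := exp_pos x
    have h4 := exp_pos y
    rw [abs_of_nonpos (by nlinarith [exp_le_exp.mpr h] : rexp x - rexp y ≤ 0),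
      abs_of_nonpos (by linarith : x - y ≤ 0)]
    nlinarith
  · have h1 := Real.add_one_le_exp (y - x)
    have h2 : rexp y = rexp x * rexp (y - x) := by rw [← Real.exp_add]; ring_nf
    have h3 := exp_pos x
    have h4 := exp_pos y
    rw [abs_of_nonneg (by nlinarith [exp_le_exp.mpr h] : 0 ≤ rexp x - rexp y),
      abs_of_nonneg (by linarith : 0 ≤ x - y)]
    nlinarith

lemma abs_le_exp_add_exp_neg (w : ℝ) : |w| ≤ rexp w + rexp (-w) := by
  have h1 : |w| + 1 ≤ rexp |w| := Real.add_one_le_exp |w|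
  rcases abs_cases w with ⟨h, _⟩ | ⟨h, _⟩ <;> rw [h] at h1 <;>
    nlinarith [exp_pos w, exp_pos (-w)]

/-- For Wiener integrals `δ(f), δ(g)` of `f, g ∈ L²([0,T])` (modelled by an
isonormal Gaussian family `δ` on a Hilbert space `H`), for every `p ≥ 1`,
`‖exp(δ(f)) − exp(δ(g))‖_{L^p} ≤ C·S_p(|f−g|)` where `C` depends only on `p`
and `|g|`. -/
theorem lpNorm_exp_wiener_sub_exp_wiener :
    ∃ C : ℝ → ℝ → ℝ, ∀ p : ℝ, 1 ≤ p →
      ∀ (H : Type) (_ : NormedAddCommGroup H) (_ : InnerProductSpace ℝ H)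
        (Ω : Type) (_ : MeasurableSpace Ω) (P : Measure Ω),
        IsProbabilityMeasure P →
        ∀ (δ : H →ₗ[ℝ] Ω → ℝ),
          (∀ h : H, Measure.map (δ h) P = gaussianReal 0 (‖h‖₊ ^ 2)) →
          ∀ f g : H,
            0 < C p ‖g‖ ∧
            eLpNorm (fun ω => Real.exp (δ f ω) - Real.exp (δ g ω))
                (ENNReal.ofReal p) P
              ≤ ENNReal.ofReal (C p ‖g‖ * Spoly p ‖f - g‖) := by
  refine ⟨fun p g => 4 * Real.exp (p * (g + 1) ^ 2), ?_⟩
  intro p hp H _ _ Ω _ P hP δ hδ f g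
  have hp0 : 0 < p := lt_of_lt_of_le one_pos hp
  refine ⟨by positivity, ?_⟩
  set l : ℝ := ‖f - g‖ with hl
  by_cases hl0 : l = 0
  · have hfg : f = g := by
      have := norm_eq_zero.mp hl0
      exact sub_eq_zero.mp this
    have : (fun ω => Real.exp (δ f ω) - Real.exp (δ g ω)) = fun _ => (0 : ℝ) := by
      funext ω; rw [hfg]; ring
    rw [this, eLpNorm_zero']
    exact zero_le
  · have hlpos : 0 < l := lt_of_le_of_ne (norm_nonneg _) (Ne.symm hl0)
    set u : H := l⁻¹ • (f - g) with hu
    have hnu : ‖u‖ = 1 := by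
      rw [hu, norm_smul, norm_inv, Real.norm_eq_abs, abs_of_pos hlpos, ← hl,
        inv_mul_cancel₀ hl0]
    -- measurability of the δ's
    have hmeas : ∀ h : H, AEMeasurable (δ h) P := fun h =>
      aemeasurable_of_map_neZero (by rw [hδ h]; infer_instance)
    have hsm : ∀ h : H, AEStronglyMeasurable (fun ω => rexp (δ h ω)) P := fun h =>
      (Real.measurable_exp.comp_aemeasurable (hmeas h)).aestronglyMeasurable
    -- the pointwise bound
    have hpt : ∀ ω, ‖rexp (δ f ω) - rexp (δ g ω)‖
        ≤ l * (rexp (δ (f + u) ω) + rexp (δ (f - u) ω)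
            + rexp (δ (g + u) ω) + rexp (δ (g - u) ω)) := by
      intro ω
      have hδu : δ u ω = l⁻¹ * (δ f ω - δ g ω) := by
        have h7 : δ u = l⁻¹ • (δ f - δ g) := by rw [hu, δ.map_smul, δ.map_sub]
        rw [h7]
        simp
      set a := δ f ω
      set b := δ g ω
      set w := δ u ω with hw
      have hab : a - b = l * w := by
        rw [hδu]; field_simp
      have h1 : |rexp a - rexp b| ≤ |a - b| * (rexp a + rexp b) := abs_exp_sub_exp_le a b
      have h2 : |a - b| ≤ l * (rexp w + rexp (-w)) := by
        rw [hab, abs_mul, abs_of_pos hlpos]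
        exact mul_le_mul_of_nonneg_left (abs_le_exp_add_exp_neg w) hlpos.le
      have h3 : δ (f + u) ω = a + w := by rw [map_add]; rfl
      have h4 : δ (f - u) ω = a - w := by rw [map_sub]; rfl
      have h5 : δ (g + u) ω = b + w := by rw [map_add]; rfl
      have h6 : δ (g - u) ω = b - w := by rw [map_sub]; rfl
      rw [Real.norm_eq_abs, h3, h4, h5, h6, Real.exp_add, Real.exp_add,
        Real.exp_sub, Real.exp_sub]
      calc |rexp a - rexp b| ≤ |a - b| * (rexp a + rexp b) := h1
        _ ≤ (l * (rexp w + rexp (-w))) * (rexp a + rexp b) := by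
            apply mul_le_mul_of_nonneg_right h2
            positivity
        _ = l * (rexp a * rexp w + rexp a / rexp w + (rexp b * rexp w + rexp b / rexp w)) := by
            rw [Real.exp_neg]
            field_simp
        _ = _ := by ring
    -- the eLpNorm of each exponential
    have hval : ∀ h : H, eLpNorm (fun ω => rexp (δ h ω)) (ENNReal.ofReal p) P
        = ENNReal.ofReal (rexp (p * ‖h‖ ^ 2 / 2)) := by
      intro h
      have := eLpNorm_exp_map_gaussian P (δ h) (‖h‖₊ ^ 2) (hδ h) hp
      rw [this]
      norm_cast
    set E : ℝ := rexp (p * (‖g‖ + 1 + l) ^ 2 / 2) with hE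
    have hbound : ∀ h : H, ‖h‖ ≤ ‖g‖ + 1 + l →
        eLpNorm (fun ω => rexp (δ h ω)) (ENNReal.ofReal p) P ≤ ENNReal.ofReal E := by
      intro h hh
      rw [hval h, hE]
      apply ENNReal.ofReal_le_ofReal
      apply Real.exp_le_exp.mpr
      have h0 : (0:ℝ) ≤ ‖h‖ := norm_nonneg _
      have hsq : ‖h‖ ^ 2 ≤ (‖g‖ + 1 + l) ^ 2 := by nlinarith
      have := mul_le_mul_of_nonneg_left hsq hp0.le
      linarith
    have hnf : ‖f‖ ≤ ‖g‖ + l := by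
      calc ‖f‖ = ‖g + (f - g)‖ := by congr 1; abel
        _ ≤ ‖g‖ + ‖f - g‖ := norm_add_le _ _
        _ = ‖g‖ + l := by rw [hl]
    have hb1 : ‖f + u‖ ≤ ‖g‖ + 1 + l := by
      calc ‖f + u‖ ≤ ‖f‖ + ‖u‖ := norm_add_le _ _
        _ ≤ ‖g‖ + l + 1 := by rw [hnu]; linarith
        _ = ‖g‖ + 1 + l := by ring
    have hb2 : ‖f - u‖ ≤ ‖g‖ + 1 + l := by
      calc ‖f - u‖ ≤ ‖f‖ + ‖u‖ := norm_sub_le _ _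
        _ ≤ ‖g‖ + l + 1 := by rw [hnu]; linarith
        _ = ‖g‖ + 1 + l := by ring
    have hb3 : ‖g + u‖ ≤ ‖g‖ + 1 + l := by
      calc ‖g + u‖ ≤ ‖g‖ + ‖u‖ := norm_add_le _ _
        _ ≤ ‖g‖ + 1 + l := by rw [hnu]; linarith
    have hb4 : ‖g - u‖ ≤ ‖g‖ + 1 + l := by
      calc ‖g - u‖ ≤ ‖g‖ + ‖u‖ := norm_sub_le _ _
        _ ≤ ‖g‖ + 1 + l := by rw [hnu]; linarith
    have hq1 : (1 : ℝ≥0∞) ≤ ENNReal.ofReal p := by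
      rw [← ENNReal.ofReal_one]
      exact ENNReal.ofReal_le_ofReal hp
    -- triangle inequality for the sum of four exponentials
    set F1 : Ω → ℝ := fun ω => rexp (δ (f + u) ω)
    set F2 : Ω → ℝ := fun ω => rexp (δ (f - u) ω)
    set F3 : Ω → ℝ := fun ω => rexp (δ (g + u) ω)
    set F4 : Ω → ℝ := fun ω => rexp (δ (g - u) ω)
    have htri : eLpNorm (fun ω => F1 ω + F2 ω + F3 ω + F4 ω) (ENNReal.ofReal p) P
        ≤ ENNReal.ofReal E + ENNReal.ofReal E + ENNReal.ofReal E + ENNReal.ofReal E := by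
      calc eLpNorm (fun ω => F1 ω + F2 ω + F3 ω + F4 ω) (ENNReal.ofReal p) P
          ≤ eLpNorm (fun ω => F1 ω + F2 ω + F3 ω) (ENNReal.ofReal p) P
            + eLpNorm F4 (ENNReal.ofReal p) P :=
            eLpNorm_add_le (((hsm _).add (hsm _)).add (hsm _)) (hsm _) hq1
        _ ≤ (eLpNorm (fun ω => F1 ω + F2 ω) (ENNReal.ofReal p) P
            + eLpNorm F3 (ENNReal.ofReal p) P) + eLpNorm F4 (ENNReal.ofReal p) P := by
            gcongr
            exact eLpNorm_add_le ((hsm _).add (hsm _)) (hsm _) hq1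
        _ ≤ ((eLpNorm F1 (ENNReal.ofReal p) P + eLpNorm F2 (ENNReal.ofReal p) P)
            + eLpNorm F3 (ENNReal.ofReal p) P) + eLpNorm F4 (ENNReal.ofReal p) P := by
            gcongr
            exact eLpNorm_add_le (hsm _) (hsm _) hq1
        _ ≤ ENNReal.ofReal E + ENNReal.ofReal E + ENNReal.ofReal E + ENNReal.ofReal E := by
            gcongr
            · exact hbound _ hb1
            · exact hbound _ hb2
            · exact hbound _ hb3
            · exact hbound _ hb4
    have hmain : eLpNorm (fun ω => Real.exp (δ f ω) - Real.exp (δ g ω)) (ENNReal.ofReal p) P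
        ≤ ENNReal.ofReal (l * (4 * E)) := by
      calc eLpNorm (fun ω => Real.exp (δ f ω) - Real.exp (δ g ω)) (ENNReal.ofReal p) P
          ≤ eLpNorm (fun ω => l * (F1 ω + F2 ω + F3 ω + F4 ω)) (ENNReal.ofReal p) P :=
            eLpNorm_mono_real hpt
        _ = ‖l‖₊ • eLpNorm (fun ω => F1 ω + F2 ω + F3 ω + F4 ω) (ENNReal.ofReal p) P := by
            rw [show (fun ω => l * (F1 ω + F2 ω + F3 ω + F4 ω))
                = l • (fun ω => F1 ω + F2 ω + F3 ω + F4 ω) from rfl]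
            exact eLpNorm_const_smul l _ _ _
        _ ≤ ‖l‖₊ • (ENNReal.ofReal E + ENNReal.ofReal E + ENNReal.ofReal E
            + ENNReal.ofReal E) := by
            exact smul_le_smul_of_nonneg_left htri zero_le
        _ = ENNReal.ofReal (l * (4 * E)) := by
            have hE0 : (0:ℝ) ≤ E := by rw [hE]; positivity
            rw [ENNReal.smul_def, smul_eq_mul, ← enorm_eq_nnnorm, Real.enorm_eq_ofReal hlpos.le,
              ← ENNReal.ofReal_add hE0 hE0, ← ENNReal.ofReal_add (by linarith) hE0,
              ← ENNReal.ofReal_add (by linarith) hE0, ← ENNReal.ofReal_mul hlpos.le]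
            congr 1
            ring
    refine hmain.trans (ENNReal.ofReal_le_ofReal ?_)
    -- final real inequality
    have hE4 : E ≤ rexp (p * (‖g‖ + 1) ^ 2) * rexp (p * l ^ 2) := by
      rw [hE, ← Real.exp_add]
      apply Real.exp_le_exp.mpr
      nlinarith [sq_nonneg (‖g‖ + 1 - l), norm_nonneg g]
    have hSpoly : l * rexp (p * l ^ 2) ≤ Spoly p l := by
      have : (1:ℝ) ≤ rexp (l ^ 2 / 2) := by
        rw [← Real.exp_zero]
        apply Real.exp_le_exp.mpr
        positivity
      rw [Spoly]
      linarith
    have hEpos := Real.exp_pos (p * (‖g‖ + 1) ^ 2)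
    calc l * (4 * E) ≤ l * (4 * (rexp (p * (‖g‖ + 1) ^ 2) * rexp (p * l ^ 2))) := by
          apply mul_le_mul_of_nonneg_left _ hlpos.le
          apply mul_le_mul_of_nonneg_left hE4 (by norm_num)
      _ = 4 * rexp (p * (‖g‖ + 1) ^ 2) * (l * rexp (p * l ^ 2)) := by ring
      _ ≤ 4 * rexp (p * (‖g‖ + 1) ^ 2) * Spoly p l := by
          apply mul_le_mul_of_nonneg_left hSpoly (by positivity)
end

section
/- For f, g ∈ L²([0,T]) and p ≥ 1, ‖E(f) − E(g)‖_{L^p} ≤ C·S_p(|f − g|), where E(h) = exp(δ(h) − |h|²/2) is the stochastic exponential, S_p(λ) = λ·exp(p·λ²) + exp(λ²/2) − 1, and C depends only on p and |g|. -/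
open MeasureTheory ProbabilityTheory Real
open NNReal ENNReal

lemma gaussianPDFReal_mul_exp (v : ℝ≥0) (hv : v ≠ 0) (t x : ℝ) :
    gaussianPDFReal 0 v x * Real.exp (t * x)
      = Real.exp ((v : ℝ) * t ^ 2 / 2) * gaussianPDFReal ((v : ℝ) * t) v x := by
  have hv' : (0 : ℝ) < v := NNReal.coe_pos.mpr (pos_iff_ne_zero.mpr hv)
  simp only [gaussianPDFReal, sub_zero]
  rw [mul_assoc, ← Real.exp_add, mul_left_comm, ← Real.exp_add]
  congr 1
  field_simp
  ring

lemma lintegral_exp_gaussianReal (v : ℝ≥0) (t : ℝ) :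
    ∫⁻ x, ENNReal.ofReal (Real.exp (t * x)) ∂(gaussianReal 0 v)
      = ENNReal.ofReal (Real.exp ((v : ℝ) * t ^ 2 / 2)) := by
  by_cases hv : v = 0
  · subst hv
    rw [gaussianReal_zero_var, lintegral_dirac' _ (by fun_prop)]
    simp
  · have hv' : (0 : ℝ) < v := NNReal.coe_pos.mpr (pos_iff_ne_zero.mpr hv)
    rw [gaussianReal_of_var_ne_zero 0 hv,
      lintegral_withDensity_eq_lintegral_mul _ (measurable_gaussianPDF 0 v) (by fun_prop)]
    have : ∀ x : ℝ, (gaussianPDF 0 v * fun x => ENNReal.ofReal (Real.exp (t * x))) x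
        = ENNReal.ofReal (Real.exp ((v : ℝ) * t ^ 2 / 2)) * gaussianPDF ((v : ℝ) * t) v x := by
      intro x
      simp only [Pi.mul_apply, gaussianPDF]
      rw [← ENNReal.ofReal_mul (gaussianPDFReal_nonneg 0 v x),
        gaussianPDFReal_mul_exp v hv t x,
        ENNReal.ofReal_mul (Real.exp_nonneg _)]
    simp_rw [this]
    rw [lintegral_const_mul _ (measurable_gaussianPDF _ v), lintegral_gaussianPDF_eq_one _ hv,
      mul_one]

lemma eLpNorm_const_mul_exp {Ω : Type} [MeasurableSpace Ω] (P : Measure Ω) [IsProbabilityMeasure P]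
    (X : Ω → ℝ) (v : ℝ≥0) (hX : Measure.map X P = gaussianReal 0 v)
    {p : ℝ} (hp : 1 ≤ p) (a b : ℝ) (hb : 0 ≤ b) :
    eLpNorm (fun ω => b * Real.exp (X ω + a)) (ENNReal.ofReal p) P
      = ENNReal.ofReal (b * Real.exp (a + p * (v : ℝ) / 2)) := by
  have hp0 : (0 : ℝ) < p := lt_of_lt_of_le one_pos hp
  have hmX : AEMeasurable X P := by
    by_contra h
    rw [Measure.map_of_not_aemeasurable h] at hX
    exact (IsProbabilityMeasure.ne_zero (gaussianReal 0 v)) hX.symm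
  rw [eLpNorm_eq_lintegral_rpow_enorm_toReal (by simpa [ENNReal.ofReal_eq_zero] using hp0)
    ENNReal.ofReal_ne_top, ENNReal.toReal_ofReal hp0.le]
  have hpt : ∀ ω, (‖b * Real.exp (X ω + a)‖ₑ) ^ p
      = ENNReal.ofReal (b ^ p * Real.exp (a * p)) * ENNReal.ofReal (Real.exp (p * X ω)) := by
    intro ω
    rw [Real.enorm_eq_ofReal (by positivity),
      ENNReal.ofReal_rpow_of_nonneg (by positivity) hp0.le,
      ← ENNReal.ofReal_mul (by positivity)]
    congr 1
    rw [Real.mul_rpow hb (Real.exp_nonneg _), ← Real.exp_mul,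
      show (X ω + a) * p = a * p + p * X ω by ring, Real.exp_add, ← mul_assoc]
  simp_rw [hpt]
  rw [lintegral_const_mul' _ _ ENNReal.ofReal_ne_top,
    ← lintegral_map' (f := fun x => ENNReal.ofReal (Real.exp (p * x))) (g := X) (by fun_prop) hmX, hX, lintegral_exp_gaussianReal,
    ← ENNReal.ofReal_mul (by positivity)]
  have hre : b ^ p * Real.exp (a * p) * Real.exp ((v : ℝ) * p ^ 2 / 2)
      = (b * Real.exp (a + p * (v : ℝ) / 2)) ^ p := by
    rw [Real.mul_rpow hb (Real.exp_nonneg _), ← Real.exp_mul, mul_assoc, ← Real.exp_add]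
    congr 2
    ring
  rw [hre, ← ENNReal.ofReal_rpow_of_nonneg (by positivity) hp0.le, ← ENNReal.rpow_mul,
    mul_one_div, div_self hp0.ne', ENNReal.rpow_one]


lemma aux_exp_sub_one_dir {a b : ℝ} (h : b ≤ a) :
    Real.exp a - Real.exp b ≤ (a - b) * (Real.exp a + Real.exp b) := by
  have h1 : Real.exp a * Real.exp (b - a) = Real.exp b := by
    rw [← Real.exp_add]; ring_nf
  have h2 := Real.add_one_le_exp (b - a)
  nlinarith [Real.exp_pos a, Real.exp_pos b]

lemma aux_abs_exp_sub : ∀ a b : ℝ, |Real.exp a - Real.exp b| ≤ |a - b| * (Real.exp a + Real.exp b) := by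
  intro a b
  rcases le_total b a with h | h
  · rw [abs_of_nonneg (by linarith : (0:ℝ) ≤ a - b),
      abs_of_nonneg (sub_nonneg.mpr (Real.exp_le_exp.mpr h))]
    exact aux_exp_sub_one_dir h
  · rw [abs_of_nonpos (by linarith : a - b ≤ 0),
      abs_of_nonpos (sub_nonpos.mpr (Real.exp_le_exp.mpr h))]
    nlinarith [aux_exp_sub_one_dir h]

lemma aux_abs_le_exp (x : ℝ) : |x| ≤ Real.exp x + Real.exp (-x) := by
  rcases abs_cases x with ⟨h, _⟩ | ⟨h, _⟩ <;>
    nlinarith [Real.add_one_le_exp x, Real.add_one_le_exp (-x), Real.exp_pos x, Real.exp_pos (-x)]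

set_option maxHeartbeats 1000000 in
lemma sum_bound (p lam G F n1 n2 n3 n4 : ℝ) (hp : 1 ≤ p) (hl : 0 ≤ lam) (hG : 0 ≤ G)
    (hF0 : 0 ≤ F) (hF : F ≤ G + lam)
    (hn1 : 0 ≤ n1) (h1 : n1 ≤ 1 + G + lam)
    (hn2 : 0 ≤ n2) (h2 : n2 ≤ 1 + G + lam)
    (hn3 : 0 ≤ n3) (h3 : n3 ≤ 1 + G + lam)
    (hn4 : 0 ≤ n4) (h4 : n4 ≤ 1 + G + lam) :
    lam * Real.exp (-(F^2/2) + p * n1^2/2) + lam * Real.exp (-(F^2/2) + p * n2^2/2)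
      + lam * Real.exp (-(G^2/2) + p * n3^2/2) + lam * Real.exp (-(G^2/2) + p * n4^2/2)
      + (lam*G + lam^2/2) * Real.exp (-(F^2/2) + p * F^2/2)
      + (lam*G + lam^2/2) * Real.exp (-(G^2/2) + p * G^2/2)
      ≤ ((5 + 2*G) * Real.exp (p * (1+G)^2)) * Spoly p lam := by
  have hp0 : (0:ℝ) < p := lt_of_lt_of_le one_pos hp
  set K := Real.exp (p * (1+G)^2) with hK
  set E := Real.exp (p * lam^2) with hE
  set E1 := Real.exp ((p-1) * lam^2) with hE1
  have hKpos := Real.exp_pos (p * (1+G)^2)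
  have hEpos := Real.exp_pos (p * lam^2)
  have hE1pos := Real.exp_pos ((p-1) * lam^2)
  have hsq : ∀ n, 0 ≤ n → n ≤ 1 + G + lam → p * n^2/2 ≤ p*(1+G)^2 + p*lam^2 := by
    intro n hn hle
    have h2' : n^2 ≤ 2*(1+G)^2 + 2*lam^2 := by nlinarith [sq_nonneg (1 + G - lam)]
    nlinarith [mul_le_mul_of_nonneg_left h2' hp0.le]
  have key : ∀ X n, 0 ≤ X → 0 ≤ n → n ≤ 1 + G + lam →
      Real.exp (-(X^2/2) + p * n^2/2) ≤ K * E := by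
    intro X n hX hn hle
    rw [hK, hE, ← Real.exp_add]
    exact Real.exp_le_exp.mpr (by nlinarith [hsq n hn hle, sq_nonneg X])
  have hF2 : F^2 ≤ 2*G^2 + 2*lam^2 := by nlinarith [sq_nonneg (G - lam)]
  have key5 : ∀ X, 0 ≤ X → X ≤ G + lam →
      Real.exp (-(X^2/2) + p * X^2/2) ≤ K * E1 := by
    intro X hX hle
    rw [hK, hE1, ← Real.exp_add]
    refine Real.exp_le_exp.mpr ?_
    have hX2 : X^2 ≤ 2*G^2 + 2*lam^2 := by nlinarith [sq_nonneg (G - lam)]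
    have h5 : (p-1) * X^2 ≤ (p-1) * (2*G^2 + 2*lam^2) :=
      mul_le_mul_of_nonneg_left hX2 (by linarith)
    have h6 : (p-1)*G^2 ≤ p*(1+G)^2 := by
      nlinarith [mul_nonneg hp0.le hG, sq_nonneg G]
    linarith
  have hlexp : lam ≤ Real.exp (lam^2) := by
    nlinarith [Real.add_one_le_exp (lam^2), sq_nonneg (lam - 1)]
  have hEsplit : E = Real.exp (lam^2) * E1 := by
    rw [hE, hE1, ← Real.exp_add]; ring_nf
  have hone : (1:ℝ) ≤ Real.exp (lam^2) := Real.one_le_exp (sq_nonneg lam)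
  have hc' : (0:ℝ) ≤ lam*G + lam^2/2 := by positivity
  calc lam * Real.exp (-(F^2/2) + p * n1^2/2) + lam * Real.exp (-(F^2/2) + p * n2^2/2)
      + lam * Real.exp (-(G^2/2) + p * n3^2/2) + lam * Real.exp (-(G^2/2) + p * n4^2/2)
      + (lam*G + lam^2/2) * Real.exp (-(F^2/2) + p * F^2/2)
      + (lam*G + lam^2/2) * Real.exp (-(G^2/2) + p * G^2/2)
      ≤ lam * (K*E) + lam * (K*E) + lam * (K*E) + lam * (K*E)
        + (lam*G + lam^2/2) * (K*E1) + (lam*G + lam^2/2) * (K*E1) := by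
        gcongr
        · exact key F n1 hF0 hn1 h1
        · exact key F n2 hF0 hn2 h2
        · exact key G n3 hG hn3 h3
        · exact key G n4 hG hn4 h4
        · exact key5 F hF0 hF
        · exact key5 G hG (by linarith)
    _ = (4 * lam * E + (2*lam*G + lam^2) * E1) * K := by ring
    _ ≤ (4 * lam * E + (2*G + 1) * (lam * E)) * K := by
        have hmain : (2*lam*G + lam^2) * E1 ≤ (2*G + 1) * (lam * E) := by
          rw [hEsplit]
          have hgl : 0 ≤ lam * G := mul_nonneg hl hG
          have hinner : 2*lam*G + lam^2 ≤ (2*G + 1) * (lam * Real.exp (lam^2)) := by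
            nlinarith [mul_le_mul_of_nonneg_left hlexp hl,
              mul_le_mul_of_nonneg_left hone hgl]
          calc (2*lam*G + lam^2) * E1
              ≤ ((2*G + 1) * (lam * Real.exp (lam^2))) * E1 :=
                mul_le_mul_of_nonneg_right hinner hE1pos.le
            _ = (2*G + 1) * (lam * (Real.exp (lam^2) * E1)) := by ring
        gcongr
    _ = ((5 + 2*G) * K) * (lam * E) := by ring
    _ ≤ ((5 + 2*G) * K) * Spoly p lam := by
        have hsp : lam * E ≤ Spoly p lam := by
          have : (1:ℝ) ≤ Real.exp (lam^2/2) := Real.one_le_exp (by positivity)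
          simp only [Spoly, hE]; nlinarith
        have : (0:ℝ) ≤ (5 + 2*G) * K := by positivity
        exact mul_le_mul_of_nonneg_left hsp this

set_option maxHeartbeats 2000000 in
/-- For `f, g ∈ L²([0,T])` and `p ≥ 1`,
`‖E(f) − E(g)‖_{L^p} ≤ C·S_p(|f − g|)`, where `E(h) = exp(δ(h) − |h|²/2)` is the
stochastic exponential and `C` depends only on `p` and `|g|`. -/
theorem lpNorm_stochExp_sub_stochExp :
    ∃ C : ℝ → ℝ → ℝ, ∀ p : ℝ, 1 ≤ p →
      ∀ (H : Type) (_ : NormedAddCommGroup H) (_ : InnerProductSpace ℝ H)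
        (Ω : Type) (_ : MeasurableSpace Ω) (P : Measure Ω),
        IsProbabilityMeasure P →
        ∀ (δ : H →ₗ[ℝ] Ω → ℝ),
          (∀ h : H, Measure.map (δ h) P = gaussianReal 0 (‖h‖₊ ^ 2)) →
          ∀ f g : H,
            0 < C p ‖g‖ ∧
            eLpNorm
                (fun ω => Real.exp (δ f ω - ‖f‖ ^ 2 / 2)
                  - Real.exp (δ g ω - ‖g‖ ^ 2 / 2))
                (ENNReal.ofReal p) P
              ≤ ENNReal.ofReal (C p ‖g‖ * Spoly p ‖f - g‖) := by
  refine ⟨fun p G => (5 + 2*G) * Real.exp (p * (1+G)^2), ?_⟩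
  intro p hp H _ _ Ω _ P hP δ hδ f g
  have hp0 : (0:ℝ) < p := lt_of_lt_of_le one_pos hp
  have hCpos : (0:ℝ) < (5 + 2*‖g‖) * Real.exp (p * (1+‖g‖)^2) := by positivity
  refine ⟨hCpos, ?_⟩
  by_cases hfg : f = g
  · subst hfg
    simp only [sub_self]
    rw [eLpNorm_zero']
    exact zero_le
  -- nondegenerate case
  have hlam : (0:ℝ) < ‖f - g‖ := norm_pos_iff.mpr (sub_ne_zero.mpr hfg)
  set lam : ℝ := ‖f - g‖ with hlamdef
  set G : ℝ := ‖g‖ with hGdef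
  set v : H := lam⁻¹ • (f - g) with hvdef
  have hvnorm : ‖v‖ = 1 := by
    rw [hvdef, norm_smul, norm_inv, norm_norm, ← hlamdef, inv_mul_cancel₀ hlam.ne']
  have hsv : lam • v = f - g := smul_inv_smul₀ hlam.ne' _
  have hAE : ∀ h : H, AEMeasurable (δ h) P := by
    intro h
    by_contra hc
    have := hδ h
    rw [Measure.map_of_not_aemeasurable hc] at this
    exact (IsProbabilityMeasure.ne_zero _) this.symm
  have hFle : ‖f‖ ≤ G + lam := by
    have := norm_sub_norm_le f g
    rw [← hlamdef, ← hGdef] at this; linarith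
  have hq1 : (1:ℝ≥0∞) ≤ ENNReal.ofReal p := ENNReal.one_le_ofReal.mpr hp
  have hcG : (0:ℝ) ≤ lam * G + lam^2/2 := by positivity
  -- the six dominating functions
  set c' : ℝ := lam * G + lam^2/2 with hc'def
  set F1 : Ω → ℝ := fun ω => lam * Real.exp (δ (v + f) ω + -(‖f‖^2/2)) with hF1
  set F2 : Ω → ℝ := fun ω => lam * Real.exp (δ (f - v) ω + -(‖f‖^2/2)) with hF2
  set F3 : Ω → ℝ := fun ω => lam * Real.exp (δ (v + g) ω + -(G^2/2)) with hF3
  set F4 : Ω → ℝ := fun ω => lam * Real.exp (δ (g - v) ω + -(G^2/2)) with hF4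
  set F5 : Ω → ℝ := fun ω => c' * Real.exp (δ f ω + -(‖f‖^2/2)) with hF5
  set F6 : Ω → ℝ := fun ω => c' * Real.exp (δ g ω + -(G^2/2)) with hF6
  have hmeas : ∀ (h : H) (a b : ℝ),
      AEStronglyMeasurable (fun ω => b * Real.exp (δ h ω + a)) P := by
    intro h a b
    exact ((Real.measurable_exp.comp_aemeasurable
      ((hAE h).add_const a)).const_mul b).aestronglyMeasurable
  -- pointwise bound
  have hpt : ∀ ω, ‖Real.exp (δ f ω - ‖f‖ ^ 2 / 2) - Real.exp (δ g ω - G ^ 2 / 2)‖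
      ≤ (F1 + F2 + F3 + F4 + F5 + F6) ω := by
    intro ω
    simp only [Pi.add_apply, hF1, hF2, hF3, hF4, hF5, hF6]
    have hadd1 : δ (v + f) ω = δ v ω + δ f ω := by rw [map_add]; rfl
    have hadd2 : δ (f - v) ω = δ f ω - δ v ω := by rw [map_sub]; rfl
    have hadd3 : δ (v + g) ω = δ v ω + δ g ω := by rw [map_add]; rfl
    have hadd4 : δ (g - v) ω = δ g ω - δ v ω := by rw [map_sub]; rfl
    have hDlam : δ f ω - δ g ω = lam * δ v ω := by
      have h1 : δ (lam • v) ω = lam * δ v ω := by rw [LinearMap.map_smul]; rfl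
      rw [hsv, map_sub] at h1
      simpa using h1
    set A : ℝ := δ f ω - ‖f‖^2/2 with hA
    set B : ℝ := δ g ω - G^2/2 with hB
    set Dv : ℝ := δ v ω with hDv
    have habs : |A - B| ≤ lam * (Real.exp Dv + Real.exp (-Dv)) + c' := by
      have hd : |(G^2 - ‖f‖^2)/2| ≤ c' := by
        have h1 : |‖f‖ - G| ≤ lam := by
          rw [hGdef, hlamdef]; exact abs_norm_sub_norm_le f g
        rw [abs_le] at h1
        have h2 := mul_le_mul_of_nonneg_left hFle hlam.le
        rcases abs_cases ((G^2 - ‖f‖^2)/2) with ⟨he, _⟩ | ⟨he, _⟩ <;> rw [he] <;>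
          nlinarith [norm_nonneg f, norm_nonneg g,
            mul_le_mul_of_nonneg_right h1.2 (by positivity : (0:ℝ) ≤ G + ‖f‖),
            mul_le_mul_of_nonneg_right (neg_le_sub_iff_le_add.mp h1.1)
              (by positivity : (0:ℝ) ≤ G + ‖f‖)]
      have hAB : A - B = lam * Dv + (G^2 - ‖f‖^2)/2 := by
        rw [hA, hB, ← hDlam]; ring
      calc |A - B| ≤ lam * |Dv| + |(G^2 - ‖f‖^2)/2| := by
            rw [hAB]
            refine (abs_add_le _ _).trans ?_
            rw [abs_mul, abs_of_nonneg hlam.le]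
        _ ≤ lam * (Real.exp Dv + Real.exp (-Dv)) + c' :=
            add_le_add (mul_le_mul_of_nonneg_left (aux_abs_le_exp Dv) hlam.le) hd
    calc ‖Real.exp A - Real.exp B‖ = |Real.exp A - Real.exp B| := Real.norm_eq_abs _
      _ ≤ |A - B| * (Real.exp A + Real.exp B) := aux_abs_exp_sub A B
      _ ≤ (lam * (Real.exp Dv + Real.exp (-Dv)) + c') * (Real.exp A + Real.exp B) := by
          have : (0:ℝ) ≤ Real.exp A + Real.exp B := by positivity
          exact mul_le_mul_of_nonneg_right habs this
      _ = lam * Real.exp (δ (v + f) ω + -(‖f‖^2/2)) + lam * Real.exp (δ (f - v) ω + -(‖f‖^2/2))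
          + lam * Real.exp (δ (v + g) ω + -(G^2/2)) + lam * Real.exp (δ (g - v) ω + -(G^2/2))
          + c' * Real.exp (δ f ω + -(‖f‖^2/2)) + c' * Real.exp (δ g ω + -(G^2/2)) := by
          rw [hadd1, hadd2, hadd3, hadd4, hA, hB]
          simp only [Real.exp_add, Real.exp_sub, Real.exp_neg]
          ring
  -- eLpNorm of each dominating function
  have hcoe : ∀ h : H, ((↑(‖h‖₊ ^ 2) : ℝ)) = ‖h‖ ^ 2 := fun h => by push_cast; ring
  have hnorm : ∀ (h : H) (a b : ℝ), 0 ≤ b →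
      eLpNorm (fun ω => b * Real.exp (δ h ω + a)) (ENNReal.ofReal p) P
        = ENNReal.ofReal (b * Real.exp (a + p * ‖h‖^2 / 2)) := by
    intro h a b hb
    rw [eLpNorm_const_mul_exp P (δ h) (‖h‖₊ ^ 2) (hδ h) hp a b hb, hcoe h]
  -- bounds on norms
  have hn1 : ‖v + f‖ ≤ 1 + G + lam := by
    refine (norm_add_le _ _).trans ?_; rw [hvnorm]; linarith
  have hn2 : ‖f - v‖ ≤ 1 + G + lam := by
    refine (norm_sub_le _ _).trans ?_; rw [hvnorm]; linarith
  have hn3 : ‖v + g‖ ≤ 1 + G + lam := by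
    refine (norm_add_le _ _).trans ?_; rw [hvnorm, ← hGdef]; linarith
  have hn4 : ‖g - v‖ ≤ 1 + G + lam := by
    refine (norm_sub_le _ _).trans ?_; rw [hvnorm, ← hGdef]; linarith
  calc eLpNorm (fun ω => Real.exp (δ f ω - ‖f‖ ^ 2 / 2)
          - Real.exp (δ g ω - G ^ 2 / 2)) (ENNReal.ofReal p) P
      ≤ eLpNorm (F1 + F2 + F3 + F4 + F5 + F6) (ENNReal.ofReal p) P :=
        eLpNorm_mono_real hpt
    _ ≤ eLpNorm F1 (ENNReal.ofReal p) P + eLpNorm F2 (ENNReal.ofReal p) P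
        + eLpNorm F3 (ENNReal.ofReal p) P + eLpNorm F4 (ENNReal.ofReal p) P
        + eLpNorm F5 (ENNReal.ofReal p) P + eLpNorm F6 (ENNReal.ofReal p) P := by
        have m1 := hmeas (v + f) (-(‖f‖^2/2)) lam
        have m2 := hmeas (f - v) (-(‖f‖^2/2)) lam
        have m3 := hmeas (v + g) (-(G^2/2)) lam
        have m4 := hmeas (g - v) (-(G^2/2)) lam
        have m5 := hmeas f (-(‖f‖^2/2)) c'
        have m6 := hmeas g (-(G^2/2)) c'
        calc eLpNorm (F1 + F2 + F3 + F4 + F5 + F6) (ENNReal.ofReal p) P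
            ≤ eLpNorm (F1 + F2 + F3 + F4 + F5) (ENNReal.ofReal p) P
              + eLpNorm F6 (ENNReal.ofReal p) P :=
              eLpNorm_add_le ((((m1.add m2).add m3).add m4).add m5) m6 hq1
          _ ≤ (eLpNorm (F1 + F2 + F3 + F4) (ENNReal.ofReal p) P
              + eLpNorm F5 (ENNReal.ofReal p) P) + eLpNorm F6 (ENNReal.ofReal p) P := by
              gcongr
              exact eLpNorm_add_le (((m1.add m2).add m3).add m4) m5 hq1
          _ ≤ ((eLpNorm (F1 + F2 + F3) (ENNReal.ofReal p) P
              + eLpNorm F4 (ENNReal.ofReal p) P) + eLpNorm F5 (ENNReal.ofReal p) P)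
              + eLpNorm F6 (ENNReal.ofReal p) P := by
              gcongr
              exact eLpNorm_add_le ((m1.add m2).add m3) m4 hq1
          _ ≤ (((eLpNorm (F1 + F2) (ENNReal.ofReal p) P
              + eLpNorm F3 (ENNReal.ofReal p) P) + eLpNorm F4 (ENNReal.ofReal p) P)
              + eLpNorm F5 (ENNReal.ofReal p) P) + eLpNorm F6 (ENNReal.ofReal p) P := by
              gcongr
              exact eLpNorm_add_le (m1.add m2) m3 hq1
          _ ≤ eLpNorm F1 (ENNReal.ofReal p) P + eLpNorm F2 (ENNReal.ofReal p) P
              + eLpNorm F3 (ENNReal.ofReal p) P + eLpNorm F4 (ENNReal.ofReal p) P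
              + eLpNorm F5 (ENNReal.ofReal p) P + eLpNorm F6 (ENNReal.ofReal p) P := by
              gcongr
              exact eLpNorm_add_le m1 m2 hq1
    _ = ENNReal.ofReal (lam * Real.exp (-(‖f‖^2/2) + p * ‖v + f‖^2 / 2))
        + ENNReal.ofReal (lam * Real.exp (-(‖f‖^2/2) + p * ‖f - v‖^2 / 2))
        + ENNReal.ofReal (lam * Real.exp (-(G^2/2) + p * ‖v + g‖^2 / 2))
        + ENNReal.ofReal (lam * Real.exp (-(G^2/2) + p * ‖g - v‖^2 / 2))
        + ENNReal.ofReal (c' * Real.exp (-(‖f‖^2/2) + p * ‖f‖^2 / 2))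
        + ENNReal.ofReal (c' * Real.exp (-(G^2/2) + p * ‖g‖^2 / 2)) := by
        rw [hF1, hF2, hF3, hF4, hF5, hF6,
          hnorm (v + f) _ _ hlam.le, hnorm (f - v) _ _ hlam.le,
          hnorm (v + g) _ _ hlam.le, hnorm (g - v) _ _ hlam.le,
          hnorm f _ _ hcG, hnorm g _ _ hcG]
    _ ≤ ENNReal.ofReal (((5 + 2*G) * Real.exp (p * (1+G)^2)) * Spoly p lam) := by
        rw [← ENNReal.ofReal_add (by positivity) (by positivity),
          ← ENNReal.ofReal_add (by positivity) (by positivity),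
          ← ENNReal.ofReal_add (by positivity) (by positivity),
          ← ENNReal.ofReal_add (by positivity) (by positivity),
          ← ENNReal.ofReal_add (by positivity) (by positivity)]
        refine ENNReal.ofReal_le_ofReal ?_
        rw [← hGdef]
        have := sum_bound p lam G ‖f‖ ‖v + f‖ ‖f - v‖ ‖v + g‖ ‖g - v‖ hp hlam.le
          (norm_nonneg g) (norm_nonneg f) hFle
          (norm_nonneg _) hn1 (norm_nonneg _) hn2 (norm_nonneg _) hn3 (norm_nonneg _) hn4
        rw [hc'def]
        convert this using 2
end

section
/- For f, g ∈ L²([0,T]) and p ≥ 1, ‖E(f)^{-1} − E(g)^{-1}‖_{L^p} ≤ C·S_p(√2·|f − g|), where E(h) = exp(δ(h) − |h|²/2), S_p(λ) = λ·exp(p·λ²) + exp(λ²/2) − 1, and C depends only on p and |g|. -/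
open MeasureTheory ProbabilityTheory Real
open scoped ENNReal NNReal

lemma gauss_mgf (v : ℝ≥0) (r : ℝ) :
    ∫⁻ x, ENNReal.ofReal (rexp (r * x)) ∂(gaussianReal 0 v)
      = ENNReal.ofReal (rexp (r ^ 2 * v / 2)) := by
  by_cases hv : v = 0
  · subst hv
    rw [gaussianReal_zero_var, lintegral_dirac' _ (by fun_prop)]
    simp
  · rw [gaussianReal_of_var_ne_zero _ hv,
      lintegral_withDensity_eq_lintegral_mul _ (measurable_gaussianPDF _ _) (by fun_prop)]
    have hv0 : (0:ℝ) < (v:ℝ) := by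
      exact lt_of_le_of_ne v.coe_nonneg (by exact_mod_cast (Ne.symm hv))
    have hpt : ∀ x : ℝ, (gaussianPDF 0 v * fun x => ENNReal.ofReal (rexp (r * x))) x
        = ENNReal.ofReal (rexp (r ^ 2 * v / 2)) * ENNReal.ofReal (gaussianPDFReal (r * v) v x) := by
      intro x
      simp only [Pi.mul_apply, gaussianPDF, ← ENNReal.ofReal_mul (gaussianPDFReal_nonneg _ _ _),
        ← ENNReal.ofReal_mul (exp_nonneg _)]
      congr 1
      unfold gaussianPDFReal
      have h2 : -(x - 0:ℝ)^2/(2*(v:ℝ)) + r*x = -(x - r*(v:ℝ))^2/(2*(v:ℝ)) + r^2*(v:ℝ)/2 := by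
        field_simp
        ring
      rw [mul_comm (rexp _), mul_assoc, ← Real.exp_add, h2, Real.exp_add]
      ring
    simp_rw [hpt]
    rw [lintegral_const_mul _ ((measurable_gaussianPDFReal _ _).ennreal_ofReal),
      lintegral_gaussianPDFReal_eq_one _ hv, mul_one]

lemma aemeasurable_of_map_gauss {Ω : Type} [MeasurableSpace Ω] {P : Measure Ω} {X : Ω → ℝ}
    {v : ℝ≥0} (hX : Measure.map X P = gaussianReal 0 v) : AEMeasurable X P := by
  by_contra h
  rw [Measure.map_of_not_aemeasurable h] at hX
  exact (IsProbabilityMeasure.ne_zero (gaussianReal 0 v)) hX.symm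

lemma eLpNorm_exp_gauss {Ω : Type} [MeasurableSpace Ω] (P : Measure Ω) (X : Ω → ℝ) (v : ℝ≥0)
    (hX : Measure.map X P = gaussianReal 0 v) {p : ℝ} (hp : 0 < p) :
    eLpNorm (fun ω => rexp (X ω)) (ENNReal.ofReal p) P = ENNReal.ofReal (rexp (p * v / 2)) := by
  have hXm : AEMeasurable X P := aemeasurable_of_map_gauss hX
  rw [eLpNorm_eq_lintegral_rpow_enorm_toReal (by simpa using hp) ENNReal.ofReal_ne_top,
    ENNReal.toReal_ofReal hp.le]
  have hpt : ∀ ω, ‖rexp (X ω)‖ₑ ^ p = ENNReal.ofReal (rexp (p * X ω)) := by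
    intro ω
    rw [Real.enorm_eq_ofReal (exp_nonneg _), ENNReal.ofReal_rpow_of_nonneg (exp_nonneg _) hp.le,
      ← Real.exp_mul, mul_comm]
  simp_rw [hpt]
  have hmap : ∫⁻ ω, ENNReal.ofReal (rexp (p * X ω)) ∂P
      = ∫⁻ x, ENNReal.ofReal (rexp (p * x)) ∂(gaussianReal 0 v) := by
    rw [← hX, lintegral_map' (by fun_prop) hXm]
  rw [hmap, gauss_mgf, ENNReal.ofReal_rpow_of_nonneg (exp_nonneg _) (by positivity),
    ← Real.exp_mul]
  congr 1
  field_simp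

lemma two_abs_le (t : ℝ) : 2 * |t| ≤ rexp t + rexp (-t) := by
  have key : ∀ s : ℝ, 0 ≤ s → 2 * s ≤ rexp s := by
    intro s hs
    have h1 := Real.add_one_le_exp (s - 1)
    have h2 : rexp (s - 1) * rexp 1 = rexp s := by rw [← Real.exp_add]; ring_nf
    have h3 : (2:ℝ) ≤ rexp 1 := by linarith [Real.add_one_le_exp (1:ℝ)]
    nlinarith [Real.exp_pos (s - 1)]
  rcases le_or_gt 0 t with h | h
  · rw [abs_of_nonneg h]
    linarith [key t h, Real.exp_pos (-t)]
  · rw [abs_of_neg h]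
    linarith [key (-t) (by linarith), Real.exp_pos t]

lemma abs_exp_sub_one_le (z : ℝ) : |rexp z - 1| ≤ |z| * (rexp z + 1) := by
  rcases le_or_gt 0 z with h | h
  · rw [abs_of_nonneg (by linarith [Real.one_le_exp h]), abs_of_nonneg h]
    have h1 := Real.add_one_le_exp (-z)
    have h2 : rexp (-z) * rexp z = 1 := by rw [← Real.exp_add]; simp
    nlinarith [Real.exp_pos z]
  · rw [abs_of_nonpos (by linarith [Real.exp_le_one_iff.mpr h.le]), abs_of_neg h]
    have h1 := Real.add_one_le_exp z
    nlinarith [Real.exp_pos z]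

lemma abs_exp_sub_one_le' (c : ℝ) : |rexp c - 1| ≤ |c| * rexp |c| := by
  rcases le_or_gt 0 c with h | h
  · rw [abs_of_nonneg h, abs_of_nonneg (by linarith [Real.one_le_exp h])]
    have h1 := Real.add_one_le_exp (-c)
    have h2 : rexp (-c) * rexp c = 1 := by rw [← Real.exp_add]; simp
    nlinarith [Real.exp_pos c]
  · rw [abs_of_neg h, abs_of_nonpos (by linarith [Real.exp_le_one_iff.mpr h.le])]
    have h1 := Real.add_one_le_exp c
    nlinarith [Real.exp_pos (-c), Real.one_le_exp (by linarith : (0:ℝ) ≤ -c)]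

lemma pointwise_bound (a b u v σ τ : ℝ) (hσ : 0 < σ) (hστ : σ * τ = 1) :
    |rexp (a - u) - rexp (b - v)| ≤
      rexp a * (σ/2) * (rexp ((1+τ)*(v-u) - v) + rexp ((1-τ)*(v-u) - v)
        + rexp (τ*(v-u) - v) + rexp ((-τ)*(v-u) - v))
      + |rexp (a-b) - 1| * (rexp b * rexp (-v)) := by
  set z := v - u with hz_def
  set c := a - b with hc_def
  have hτ : 0 < τ := by nlinarith
  have hE : rexp (a-u) - rexp (b-v) = rexp (b-v) * (rexp (z+c) - 1) := by
    rw [mul_sub, ← Real.exp_add, mul_one]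
    congr 2
    simp [hz_def, hc_def]; ring
  have h1 : |rexp (z+c) - 1| ≤ rexp c * |rexp z - 1| + |rexp c - 1| := by
    have hexp : rexp (z+c) - 1 = rexp c * (rexp z - 1) + (rexp c - 1) := by
      rw [Real.exp_add]; ring
    rw [hexp]
    refine (abs_add_le _ _).trans ?_
    rw [abs_mul, Real.abs_exp]
  have hzb : |z| ≤ (σ/2) * (rexp (τ*z) + rexp (-(τ*z))) := by
    have h2 := two_abs_le (τ*z)
    have habs : 2 * |z| = σ * (2 * |τ*z|) := by
      rw [abs_mul, abs_of_pos hτ]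
      nlinarith [abs_nonneg z]
    nlinarith [abs_nonneg (τ*z)]
  have h2 : |rexp z - 1| ≤ (σ/2) * (rexp (τ*z) + rexp (-(τ*z))) * (rexp z + 1) :=
    (abs_exp_sub_one_le z).trans (mul_le_mul_of_nonneg_right hzb (by positivity))
  calc |rexp (a-u) - rexp (b-v)| = rexp (b-v) * |rexp (z+c) - 1| := by
        rw [hE, abs_mul, Real.abs_exp]
    _ ≤ rexp (b-v) * (rexp c * ((σ/2) * (rexp (τ*z) + rexp (-(τ*z))) * (rexp z + 1)) + |rexp c - 1|) := by
        have hh := h1.trans (add_le_add (mul_le_mul_of_nonneg_left h2 (Real.exp_pos c).le) le_rfl)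
        exact mul_le_mul_of_nonneg_left hh (Real.exp_pos _).le
    _ = rexp a * (σ/2) * (rexp ((1+τ)*z - v) + rexp ((1-τ)*z - v)
        + rexp (τ*z - v) + rexp ((-τ)*z - v)) + |rexp c - 1| * (rexp b * rexp (-v)) := by
        rw [hc_def]
        have e1 : rexp ((1+τ)*z - v) = rexp (τ*z) * (rexp z * rexp (-v)) := by
          rw [← Real.exp_add, ← Real.exp_add, Real.exp_eq_exp]; ring
        have e2 : rexp ((1-τ)*z - v) = rexp (-(τ*z)) * (rexp z * rexp (-v)) := by
          rw [← Real.exp_add, ← Real.exp_add, Real.exp_eq_exp]; ring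
        have e3 : rexp (τ*z - v) = rexp (τ*z) * rexp (-v) := by
          rw [← Real.exp_add, Real.exp_eq_exp]; ring
        have e4 : rexp ((-τ)*z - v) = rexp (-(τ*z)) * rexp (-v) := by
          rw [← Real.exp_add, Real.exp_eq_exp]; ring
        have e5 : rexp (b - v) = rexp b * rexp (-v) := by
          rw [← Real.exp_add, Real.exp_eq_exp]; ring
        have e6 : rexp (a-b) * rexp b = rexp a := by
          rw [← Real.exp_add, Real.exp_eq_exp]; ring
        rw [e1, e2, e3, e4, e5]
        linear_combination (σ/2 * (rexp (τ*z) + rexp (-(τ*z))) * (rexp z + 1) * rexp (-v)) * e6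

set_option maxHeartbeats 4000000 in
/-- For `f, g ∈ L²([0,T])` and `p ≥ 1`,
`‖E(f)⁻¹ − E(g)⁻¹‖_{L^p} ≤ C·S_p(√2·|f − g|)`, where `E(h) = exp(δ(h) − |h|²/2)`
is the stochastic exponential and `C` depends only on `p` and `|g|`. -/
theorem lpNorm_inv_stochExp_sub_inv_stochExp :
    ∃ C : ℝ → ℝ → ℝ, ∀ p : ℝ, 1 ≤ p →
      ∀ (H : Type) (_ : NormedAddCommGroup H) (_ : InnerProductSpace ℝ H)
        (Ω : Type) (_ : MeasurableSpace Ω) (P : Measure Ω),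
        IsProbabilityMeasure P →
        ∀ (δ : H →ₗ[ℝ] Ω → ℝ),
          (∀ h : H, Measure.map (δ h) P = gaussianReal 0 (‖h‖₊ ^ 2)) →
          ∀ f g : H,
            0 < C p ‖g‖ ∧
            eLpNorm
                (fun ω => (Real.exp (δ f ω - ‖f‖ ^ 2 / 2))⁻¹
                  - (Real.exp (δ g ω - ‖g‖ ^ 2 / 2))⁻¹)
                (ENNReal.ofReal p) P
              ≤ ENNReal.ofReal (C p ‖g‖ * Spoly p (Real.sqrt 2 * ‖f - g‖)) := by
  refine ⟨fun p G => 5 * rexp ((p+1) * (G+2)^2), ?_⟩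
  intro p hp H _ _ Ω _ P hP δ hmap f g
  refine ⟨by positivity, ?_⟩
  have hp0 : (0:ℝ) < p := lt_of_lt_of_le one_pos hp
  set q : ℝ≥0∞ := ENNReal.ofReal p with hq_def
  have hq1 : 1 ≤ q := ENNReal.one_le_ofReal.mpr hp
  have hG0 : (0:ℝ) ≤ ‖g‖ := norm_nonneg g
  have hσ0 : (0:ℝ) ≤ ‖f - g‖ := norm_nonneg _
  have hCC0 : (0:ℝ) ≤ 5 * rexp ((p+1) * (‖g‖+2)^2) := by positivity
  -- reduce to the simpler RHS
  have hS : ENNReal.ofReal (5 * rexp ((p+1) * (‖g‖+2)^2) * (‖f - g‖ * rexp (2*p*‖f - g‖^2)))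
      ≤ ENNReal.ofReal (5 * rexp ((p+1) * (‖g‖+2)^2) * Spoly p (Real.sqrt 2 * ‖f - g‖)) := by
    apply ENNReal.ofReal_le_ofReal
    apply mul_le_mul_of_nonneg_left _ hCC0
    have hsq : (Real.sqrt 2 * ‖f - g‖)^2 = 2 * ‖f - g‖^2 := by
      rw [mul_pow, Real.sq_sqrt (by norm_num : (0:ℝ) ≤ 2)]
    have h2 : (1:ℝ) ≤ Real.sqrt 2 := by
      nlinarith [Real.sq_sqrt (by norm_num : (0:ℝ) ≤ 2), Real.sqrt_nonneg 2]
    unfold Spoly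
    rw [hsq]
    have e1 : ‖f - g‖ * rexp (p * (2*‖f - g‖^2))
        ≤ Real.sqrt 2 * ‖f - g‖ * rexp (p * (2*‖f - g‖^2)) := by
      have := mul_nonneg (mul_nonneg (by linarith : (0:ℝ) ≤ Real.sqrt 2 - 1) hσ0)
        (Real.exp_pos (p * (2*‖f - g‖^2))).le
      nlinarith
    have e2 : (1:ℝ) ≤ rexp (2*‖f - g‖^2/2) := Real.one_le_exp (by positivity)
    have e3 : 2*p*‖f - g‖^2 = p * (2*‖f - g‖^2) := by ring
    rw [e3]
    linarith
  refine le_trans ?_ hS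
  -- measurability
  have hδm : ∀ h : H, AEMeasurable (δ h) P := fun h => aemeasurable_of_map_gauss (hmap h)
  have hasm : ∀ (k : ℝ) (h : H), AEStronglyMeasurable (fun ω => k * rexp (δ h ω)) P :=
    fun k h => ((Real.measurable_exp.comp_aemeasurable (hδm h)).const_mul k).aestronglyMeasurable
  -- eLpNorm of each basic term
  have hterm : ∀ (k : ℝ), 0 ≤ k → ∀ h : H,
      eLpNorm (fun ω => k * rexp (δ h ω)) q P = ENNReal.ofReal (k * rexp (p * ‖h‖^2 / 2)) := by
    intro k hk h
    have base := eLpNorm_exp_gauss P (δ h) (‖h‖₊^2) (hmap h) hp0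
    have hcoe : ((‖h‖₊^2 : ℝ≥0) : ℝ) = ‖h‖^2 := by
      push_cast [coe_nnnorm]; ring
    rw [hcoe] at base
    have hfun : (fun ω => k * rexp (δ h ω)) = k • (fun ω => rexp (δ h ω)) := rfl
    rw [hfun, eLpNorm_const_smul, base]
    rw [Real.enorm_eq_ofReal hk, ← ENNReal.ofReal_mul hk]
  -- rewrite the target function
  have hDeq : (fun ω => (rexp (δ f ω - ‖f‖ ^ 2 / 2))⁻¹ - (rexp (δ g ω - ‖g‖ ^ 2 / 2))⁻¹)
      = fun ω => rexp (‖f‖^2/2 - δ f ω) - rexp (‖g‖^2/2 - δ g ω) := by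
    funext ω
    rw [← Real.exp_neg, ← Real.exp_neg, neg_sub, neg_sub]
  rw [hDeq]
  have hfG : ‖f‖ ≤ ‖g‖ + ‖f - g‖ := by
    calc ‖f‖ = ‖g + (f - g)‖ := by rw [add_sub_cancel]
    _ ≤ ‖g‖ + ‖f - g‖ := norm_add_le g (f - g)
  by_cases hfg : f = g
  · subst hfg
    simp only [sub_self]
    rw [eLpNorm_zero']
    exact zero_le
  have hσpos : 0 < ‖f - g‖ := norm_pos_iff.mpr (sub_ne_zero.mpr hfg)
  have hone : ∀ h : H, eLpNorm (fun ω => rexp (‖h‖^2/2) * rexp (δ (-h) ω)) q P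
      = ENNReal.ofReal (rexp (‖h‖^2/2) * rexp (p * ‖h‖^2 / 2)) := by
    intro h
    have h1 := hterm (rexp (‖h‖^2/2)) (Real.exp_nonneg _) (-h)
    rwa [norm_neg] at h1
  rcases le_or_gt 1 ‖f - g‖ with hσ1 | hσ1
  · -- large σ : triangle inequality
    have hsplit : ∀ h : H, (fun ω => rexp (‖h‖^2/2 - δ h ω))
        = fun ω => rexp (‖h‖^2/2) * rexp (δ (-h) ω) := by
      intro h
      funext ω
      rw [← Real.exp_add, Real.exp_eq_exp, map_neg, Pi.neg_apply]
      ring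
    calc eLpNorm (fun ω => rexp (‖f‖^2/2 - δ f ω) - rexp (‖g‖^2/2 - δ g ω)) q P
        ≤ eLpNorm (fun ω => rexp (‖f‖^2/2 - δ f ω)) q P
          + eLpNorm (fun ω => rexp (‖g‖^2/2 - δ g ω)) q P := by
          apply eLpNorm_sub_le ?_ ?_ hq1
          · exact (Real.measurable_exp.comp_aemeasurable ((hδm f).const_sub _)).aestronglyMeasurable
          · exact (Real.measurable_exp.comp_aemeasurable ((hδm g).const_sub _)).aestronglyMeasurable
      _ = ENNReal.ofReal (rexp (‖f‖^2/2) * rexp (p * ‖f‖^2 / 2))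
          + ENNReal.ofReal (rexp (‖g‖^2/2) * rexp (p * ‖g‖^2 / 2)) := by
          rw [hsplit f, hsplit g, hone f, hone g]
      _ = ENNReal.ofReal (rexp (‖f‖^2/2) * rexp (p * ‖f‖^2 / 2)
          + rexp (‖g‖^2/2) * rexp (p * ‖g‖^2 / 2)) := by
          rw [ENNReal.ofReal_add (by positivity) (by positivity)]
      _ ≤ ENNReal.ofReal (5 * rexp ((p+1) * (‖g‖+2)^2) * (‖f - g‖ * rexp (2*p*‖f - g‖^2))) := by
          apply ENNReal.ofReal_le_ofReal
          have hf2 : ‖f‖^2 ≤ (‖g‖ + ‖f - g‖)^2 := by nlinarith [norm_nonneg f]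
          have m1 : rexp (‖f‖^2/2) * rexp (p * ‖f‖^2 / 2)
              ≤ rexp ((p+1) * (‖g‖+2)^2) * rexp (2*p*‖f - g‖^2) := by
            rw [← Real.exp_add, ← Real.exp_add]
            apply Real.exp_le_exp.mpr
            nlinarith [sq_nonneg (‖g‖ - ‖f - g‖), sq_nonneg (‖f - g‖),
              mul_nonneg (sub_nonneg.mpr hp) (sq_nonneg ‖f - g‖),
              mul_nonneg (by linarith : (0:ℝ) ≤ p + 1) (by nlinarith : (0:ℝ) ≤ 4*‖g‖ + 4)]
          have m2 : rexp (‖g‖^2/2) * rexp (p * ‖g‖^2 / 2)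
              ≤ rexp ((p+1) * (‖g‖+2)^2) * rexp (2*p*‖f - g‖^2) := by
            rw [← Real.exp_add, ← Real.exp_add]
            apply Real.exp_le_exp.mpr
            nlinarith [mul_nonneg (sub_nonneg.mpr hp) (sq_nonneg ‖f - g‖),
              mul_nonneg (by linarith : (0:ℝ) ≤ p + 1) (by nlinarith : (0:ℝ) ≤ 4*‖g‖ + 4),
              mul_nonneg (by linarith : (0:ℝ) ≤ 2*p) (sq_nonneg ‖f - g‖)]
          have hpos := Real.exp_pos ((p+1) * (‖g‖+2)^2)
          have hpos2 := Real.exp_pos (2*p*‖f - g‖^2)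
          nlinarith [mul_pos hpos hpos2]
  · -- small σ : pointwise bound
    set σ : ℝ := ‖f - g‖ with hσ_def
    set τ : ℝ := σ⁻¹ with hτ_def
    have hστ : σ * τ = 1 := mul_inv_cancel₀ hσpos.ne'
    have hτpos : 0 < τ := inv_pos.mpr hσpos
    set k1 : ℝ := rexp (‖f‖^2/2) * (σ/2) with hk1_def
    set k5 : ℝ := |rexp (‖f‖^2/2 - ‖g‖^2/2) - 1| * rexp (‖g‖^2/2) with hk5_def
    have hk1nn : 0 ≤ k1 := by positivity
    have hk5nn : 0 ≤ k5 := by positivity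
    have hδi : ∀ (μ : ℝ) (ω : Ω), δ (μ • (g-f) - g) ω = μ * (δ g ω - δ f ω) - δ g ω := by
      intro μ ω
      have : δ (μ • (g-f) - g) = μ • (δ g - δ f) - δ g := by
        rw [map_sub, LinearMap.map_smul, map_sub]
      rw [this]
      simp [Pi.smul_apply, Pi.sub_apply, smul_eq_mul]
    have hpt : ∀ ω, ‖rexp (‖f‖^2/2 - δ f ω) - rexp (‖g‖^2/2 - δ g ω)‖ ≤
        k1 * rexp (δ ((1+τ) • (g-f) - g) ω) + k1 * rexp (δ ((1-τ) • (g-f) - g) ω) + k1 * rexp (δ (τ • (g-f) - g) ω) + k1 * rexp (δ ((-τ) • (g-f) - g) ω)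
          + k5 * rexp (δ (-g) ω) := by
      intro ω
      have hmain := pointwise_bound (‖f‖^2/2) (‖g‖^2/2) (δ f ω) (δ g ω) σ τ hσpos hστ
      rw [Real.norm_eq_abs]
      refine hmain.trans (le_of_eq ?_)
      simp only [hδi, map_neg, Pi.neg_apply, hk1_def, hk5_def]
      ring
    calc eLpNorm (fun ω => rexp (‖f‖^2/2 - δ f ω) - rexp (‖g‖^2/2 - δ g ω)) q P
        ≤ eLpNorm ((fun ω => k1 * rexp (δ ((1+τ) • (g-f) - g) ω)) + (fun ω => k1 * rexp (δ ((1-τ) • (g-f) - g) ω))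
            + (fun ω => k1 * rexp (δ (τ • (g-f) - g) ω)) + (fun ω => k1 * rexp (δ ((-τ) • (g-f) - g) ω))
            + (fun ω => k5 * rexp (δ (-g) ω))) q P := eLpNorm_mono_real hpt
      _ ≤ eLpNorm ((fun ω => k1 * rexp (δ ((1+τ) • (g-f) - g) ω)) + (fun ω => k1 * rexp (δ ((1-τ) • (g-f) - g) ω))
            + (fun ω => k1 * rexp (δ (τ • (g-f) - g) ω)) + (fun ω => k1 * rexp (δ ((-τ) • (g-f) - g) ω))) q P
          + eLpNorm (fun ω => k5 * rexp (δ (-g) ω)) q P :=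
          eLpNorm_add_le ((((hasm _ _).add (hasm _ _)).add (hasm _ _)).add (hasm _ _))
            (hasm _ _) hq1
      _ ≤ (eLpNorm ((fun ω => k1 * rexp (δ ((1+τ) • (g-f) - g) ω)) + (fun ω => k1 * rexp (δ ((1-τ) • (g-f) - g) ω))
            + (fun ω => k1 * rexp (δ (τ • (g-f) - g) ω))) q P + eLpNorm (fun ω => k1 * rexp (δ ((-τ) • (g-f) - g) ω)) q P)
          + eLpNorm (fun ω => k5 * rexp (δ (-g) ω)) q P := by
          gcongr
          exact eLpNorm_add_le (((hasm _ _).add (hasm _ _)).add (hasm _ _)) (hasm _ _) hq1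
      _ ≤ ((eLpNorm ((fun ω => k1 * rexp (δ ((1+τ) • (g-f) - g) ω)) + (fun ω => k1 * rexp (δ ((1-τ) • (g-f) - g) ω))) q P
            + eLpNorm (fun ω => k1 * rexp (δ (τ • (g-f) - g) ω)) q P)
            + eLpNorm (fun ω => k1 * rexp (δ ((-τ) • (g-f) - g) ω)) q P)
          + eLpNorm (fun ω => k5 * rexp (δ (-g) ω)) q P := by
          gcongr
          exact eLpNorm_add_le ((hasm _ _).add (hasm _ _)) (hasm _ _) hq1
      _ ≤ (((eLpNorm (fun ω => k1 * rexp (δ ((1+τ) • (g-f) - g) ω)) q P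
            + eLpNorm (fun ω => k1 * rexp (δ ((1-τ) • (g-f) - g) ω)) q P)
            + eLpNorm (fun ω => k1 * rexp (δ (τ • (g-f) - g) ω)) q P)
            + eLpNorm (fun ω => k1 * rexp (δ ((-τ) • (g-f) - g) ω)) q P)
          + eLpNorm (fun ω => k5 * rexp (δ (-g) ω)) q P := by
          gcongr
          exact eLpNorm_add_le (hasm _ _) (hasm _ _) hq1
      _ = ENNReal.ofReal (k1 * rexp (p * ‖(1+τ) • (g-f) - g‖^2 / 2) + k1 * rexp (p * ‖(1-τ) • (g-f) - g‖^2 / 2)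
            + k1 * rexp (p * ‖τ • (g-f) - g‖^2 / 2) + k1 * rexp (p * ‖(-τ) • (g-f) - g‖^2 / 2)
            + k5 * rexp (p * ‖(-g)‖^2 / 2)) := by
          rw [hterm k1 hk1nn _, hterm k1 hk1nn _, hterm k1 hk1nn _, hterm k1 hk1nn _,
            hterm k5 hk5nn (-g), ← ENNReal.ofReal_add (by positivity) (by positivity),
            ← ENNReal.ofReal_add (by positivity) (by positivity),
            ← ENNReal.ofReal_add (by positivity) (by positivity),
            ← ENNReal.ofReal_add (by positivity) (by positivity)]
      _ ≤ ENNReal.ofReal (5 * rexp ((p+1) * (‖g‖+2)^2) * (σ * rexp (2*p*σ^2))) := by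
          apply ENNReal.ofReal_le_ofReal
          -- norm bounds
          have hN : ∀ μ : ℝ, |μ| ≤ 1 + τ → ‖μ • (g-f) - g‖ ≤ ‖g‖ + 2 := by
            intro μ hμ
            have e1 : ‖μ • (g-f) - g‖ ≤ |μ| * σ + ‖g‖ := by
              calc ‖μ • (g-f) - g‖ ≤ ‖μ • (g-f)‖ + ‖g‖ := norm_sub_le _ _
              _ = |μ| * σ + ‖g‖ := by
                  rw [norm_smul, Real.norm_eq_abs, hσ_def, norm_sub_rev]
            have e2 : |μ| * σ ≤ (1+τ) * σ := mul_le_mul_of_nonneg_right hμ hσ0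
            have e3 : (1+τ) * σ = σ + 1 := by
              rw [add_mul, one_mul, mul_comm τ σ, hστ]
            linarith
          have hb1 : ‖(1+τ) • (g-f) - g‖ ≤ ‖g‖ + 2 := hN _ (by rw [abs_of_pos (by linarith : (0:ℝ) < 1+τ)])
          have hb2 : ‖(1-τ) • (g-f) - g‖ ≤ ‖g‖ + 2 := hN _ (abs_le.mpr ⟨by linarith, by linarith⟩)
          have hb3 : ‖τ • (g-f) - g‖ ≤ ‖g‖ + 2 := hN _ (by rw [abs_of_pos hτpos]; linarith)
          have hb4 : ‖(-τ) • (g-f) - g‖ ≤ ‖g‖ + 2 := hN _ (by rw [abs_neg, abs_of_pos hτpos]; linarith)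
          have hX : ∀ h : H, ‖h‖ ≤ ‖g‖ + 2 → rexp (p * ‖h‖^2/2) ≤ rexp (p * (‖g‖+2)^2/2) := by
            intro h hh
            apply Real.exp_le_exp.mpr
            have : ‖h‖^2 ≤ (‖g‖+2)^2 := by nlinarith [norm_nonneg h]
            nlinarith
          have hX5 : rexp (p * ‖(-g)‖^2/2) = rexp (p * ‖g‖^2/2) := by rw [norm_neg]
          -- coefficient bounds
          have hfg1 : ‖f‖ ≤ ‖g‖ + 1 := by linarith
          have hk1b : k1 ≤ rexp ((‖g‖+1)^2/2) * (σ/2) := by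
            rw [hk1_def]
            have : rexp (‖f‖^2/2) ≤ rexp ((‖g‖+1)^2/2) := by
              apply Real.exp_le_exp.mpr
              nlinarith [norm_nonneg f]
            nlinarith [Real.exp_pos (‖f‖^2/2)]
          have hcb : |‖f‖^2/2 - ‖g‖^2/2| ≤ σ * (2*‖g‖+1)/2 := by
            have hd : |‖f‖ - ‖g‖| ≤ σ := by
              rw [hσ_def]; exact abs_norm_sub_norm_le f g
            rw [abs_le] at hd ⊢
            constructor <;> nlinarith [norm_nonneg f, hd.1, hd.2]
          have hcb2 : |‖f‖^2/2 - ‖g‖^2/2| ≤ ‖g‖ + 1 := by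
            nlinarith [hcb, hσpos]
          have hk5b : k5 ≤ σ * (‖g‖+1) * rexp ((‖g‖+1) + ‖g‖^2/2) := by
            rw [hk5_def, Real.exp_add]
            have e1 : |rexp (‖f‖^2/2 - ‖g‖^2/2) - 1|
                ≤ (σ * (2*‖g‖+1)/2) * rexp (‖g‖+1) := by
              refine (abs_exp_sub_one_le' _).trans ?_
              have e2 : rexp |‖f‖^2/2 - ‖g‖^2/2| ≤ rexp (‖g‖+1) :=
                Real.exp_le_exp.mpr hcb2
              have := abs_nonneg (‖f‖^2/2 - ‖g‖^2/2)
              nlinarith [Real.exp_pos |‖f‖^2/2 - ‖g‖^2/2|, Real.exp_pos (‖g‖+1)]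
            have e3 : (σ * (2*‖g‖+1)/2) ≤ σ * (‖g‖+1) := by nlinarith
            have step1 := mul_le_mul_of_nonneg_right e1 (Real.exp_pos (‖g‖^2/2)).le
            have step2 := mul_le_mul_of_nonneg_right e3
              (mul_nonneg (Real.exp_pos (‖g‖+1)).le (Real.exp_pos (‖g‖^2/2)).le)
            nlinarith [step1, step2]
          -- combine
          have T1 : k1 * rexp (p * ‖(1+τ) • (g-f) - g‖^2 / 2)
              ≤ (rexp ((‖g‖+1)^2/2) * (σ/2)) * rexp (p * (‖g‖+2)^2/2) :=
            mul_le_mul hk1b (hX _ hb1) (Real.exp_pos _).le (by positivity)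
          have T2 : k1 * rexp (p * ‖(1-τ) • (g-f) - g‖^2 / 2)
              ≤ (rexp ((‖g‖+1)^2/2) * (σ/2)) * rexp (p * (‖g‖+2)^2/2) :=
            mul_le_mul hk1b (hX _ hb2) (Real.exp_pos _).le (by positivity)
          have T3 : k1 * rexp (p * ‖τ • (g-f) - g‖^2 / 2)
              ≤ (rexp ((‖g‖+1)^2/2) * (σ/2)) * rexp (p * (‖g‖+2)^2/2) :=
            mul_le_mul hk1b (hX _ hb3) (Real.exp_pos _).le (by positivity)
          have T4 : k1 * rexp (p * ‖(-τ) • (g-f) - g‖^2 / 2)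
              ≤ (rexp ((‖g‖+1)^2/2) * (σ/2)) * rexp (p * (‖g‖+2)^2/2) :=
            mul_le_mul hk1b (hX _ hb4) (Real.exp_pos _).le (by positivity)
          have T5 : k5 * rexp (p * ‖(-g)‖^2 / 2)
              ≤ (σ * (‖g‖+1) * rexp ((‖g‖+1) + ‖g‖^2/2)) * rexp (p * ‖g‖^2/2) := by
            rw [hX5]
            exact mul_le_mul_of_nonneg_right hk5b (Real.exp_pos _).le
          -- final scalar estimate
          have F1 : (rexp ((‖g‖+1)^2/2) * (σ/2)) * rexp (p * (‖g‖+2)^2/2)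
              = (σ/2) * rexp ((‖g‖+1)^2/2 + p * (‖g‖+2)^2/2) := by
            rw [Real.exp_add]; ring
          have F2 : rexp ((‖g‖+1)^2/2 + p * (‖g‖+2)^2/2) ≤ rexp ((p+1) * (‖g‖+2)^2) := by
            apply Real.exp_le_exp.mpr
            nlinarith [sq_nonneg (‖g‖+2), mul_nonneg (sub_nonneg.mpr hp) (sq_nonneg (‖g‖+2))]
          have F3 : (σ * (‖g‖+1) * rexp ((‖g‖+1) + ‖g‖^2/2)) * rexp (p * ‖g‖^2/2)
              ≤ σ * rexp ((p+1) * (‖g‖+2)^2) := by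
            have g1 : ‖g‖ + 1 ≤ rexp (‖g‖+1) := by
              linarith [Real.add_one_le_exp (‖g‖+1)]
            have g2 : rexp (‖g‖+1) * rexp ((‖g‖+1) + ‖g‖^2/2) * rexp (p * ‖g‖^2/2)
                = rexp (2*(‖g‖+1) + ‖g‖^2/2 + p * ‖g‖^2/2) := by
              rw [← Real.exp_add, ← Real.exp_add]; ring_nf
            have g3 : rexp (2*(‖g‖+1) + ‖g‖^2/2 + p * ‖g‖^2/2) ≤ rexp ((p+1) * (‖g‖+2)^2) := by
              apply Real.exp_le_exp.mpr
              nlinarith [sq_nonneg ‖g‖, mul_nonneg (sub_nonneg.mpr hp) (sq_nonneg ‖g‖),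
                mul_nonneg (by linarith : (0:ℝ) ≤ p) hG0, hG0, hp]
            calc (σ * (‖g‖+1) * rexp ((‖g‖+1) + ‖g‖^2/2)) * rexp (p * ‖g‖^2/2)
                ≤ (σ * rexp (‖g‖+1) * rexp ((‖g‖+1) + ‖g‖^2/2)) * rexp (p * ‖g‖^2/2) := by
                  have key := mul_le_mul_of_nonneg_right
                    (mul_le_mul_of_nonneg_left g1 hσ0)
                    (mul_nonneg (Real.exp_pos ((‖g‖+1) + ‖g‖^2/2)).le
                      (Real.exp_pos (p * ‖g‖^2/2)).le)
                  nlinarith [key]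
              _ = σ * (rexp (‖g‖+1) * rexp ((‖g‖+1) + ‖g‖^2/2) * rexp (p * ‖g‖^2/2)) := by ring
              _ = σ * rexp (2*(‖g‖+1) + ‖g‖^2/2 + p * ‖g‖^2/2) := by rw [g2]
              _ ≤ σ * rexp ((p+1) * (‖g‖+2)^2) := mul_le_mul_of_nonneg_left g3 hσ0
          have hfin : 4 * ((σ/2) * rexp ((p+1) * (‖g‖+2)^2)) + σ * rexp ((p+1) * (‖g‖+2)^2)
              ≤ 5 * rexp ((p+1) * (‖g‖+2)^2) * (σ * rexp (2*p*σ^2)) := by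
            have hh : (1:ℝ) ≤ rexp (2*p*σ^2) := Real.one_le_exp (by positivity)
            nlinarith [Real.exp_pos ((p+1) * (‖g‖+2)^2),
              mul_nonneg hσ0 (Real.exp_pos ((p+1) * (‖g‖+2)^2)).le]
          have F2' : (σ/2) * rexp ((‖g‖+1)^2/2 + p * (‖g‖+2)^2/2)
              ≤ (σ/2) * rexp ((p+1) * (‖g‖+2)^2) :=
            mul_le_mul_of_nonneg_left F2 (by positivity)
          linarith [T1, T2, T3, T4, T5, F1, F2', F3, hfin]
end

section
/- Pathwise stability estimate: let b be C₁-Lipschitz with linear growth constant C₂, let E_ε, E₀ : [0,T] → (0,∞) be continuous, and let Z^ε, Z solve Z^ε_t = x + ∫₀ᵗ b(Z^ε_s E_ε(s)^{-1})E_ε(s)ds and Z_t = x + ∫₀ᵗ b(Z_s E₀(s)^{-1})E₀(s)ds. Then sup_{t∈[0,T]} |Z^ε_t − Z_t| ≤ e^{C₁T}·Λ_ε, where Λ_ε = C₁∫₀ᵀ |Z_s|·|E_ε(s)^{-1} − E₀(s)^{-1}|·E_ε(s)ds + C₂∫₀ᵀ (1 + |Z_s|E₀(s)^{-1})·|E_ε(s)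 − E₀(s)|ds. -/
open MeasureTheory intervalIntegral Real

/-- Pathwise stability estimate: let `b` be `C₁`-Lipschitz with linear growth
constant `C₂`, let `Eε, E₀ : [0,T] → (0,∞)` be continuous, and let `Zε, Z` solve
`Zε_t = x + ∫₀ᵗ b(Zε_s·Eε(s)⁻¹)·Eε(s) ds` and
`Z_t = x + ∫₀ᵗ b(Z_s·E₀(s)⁻¹)·E₀(s) ds`.  Then
`sup_{t∈[0,T]} |Zε_t − Z_t| ≤ e^{C₁T}·Λε`, where
`Λε = C₁∫₀ᵀ |Z_s|·|Eε(s)⁻¹ − E₀(s)⁻¹|·Eε(s) ds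
      + C₂∫₀ᵀ (1 + |Z_s|·E₀(s)⁻¹)·|Eε(s) − E₀(s)| ds`. -/
theorem pathwise_stability_estimate
    (T x C₁ C₂ : ℝ) (hT : 0 < T) (hC₁ : 0 < C₁) (hC₂ : 0 < C₂)
    (b : ℝ → ℝ) (hb_meas : Measurable b)
    (hb_lip : ∀ u v : ℝ, |b u - b v| ≤ C₁ * |u - v|)
    (hb_growth : ∀ u : ℝ, |b u| ≤ C₂ * (1 + |u|))
    (Eε E₀ : ℝ → ℝ)
    (hEε_cont : ContinuousOn Eε (Set.Icc 0 T))
    (hE₀_cont : ContinuousOn E₀ (Set.Icc 0 T))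
    (hEε_pos : ∀ s ∈ Set.Icc (0 : ℝ) T, 0 < Eε s)
    (hE₀_pos : ∀ s ∈ Set.Icc (0 : ℝ) T, 0 < E₀ s)
    (Zε Z : ℝ → ℝ)
    (hZε_cont : ContinuousOn Zε (Set.Icc 0 T))
    (hZ_cont : ContinuousOn Z (Set.Icc 0 T))
    (hZε : ∀ t ∈ Set.Icc (0 : ℝ) T,
      Zε t = x + ∫ s in (0 : ℝ)..t, b (Zε s * (Eε s)⁻¹) * Eε s)
    (hZ : ∀ t ∈ Set.Icc (0 : ℝ) T,
      Z t = x + ∫ s in (0 : ℝ)..t, b (Z s * (E₀ s)⁻¹) * E₀ s) :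
    ∀ t ∈ Set.Icc (0 : ℝ) T,
      |Zε t - Z t| ≤ Real.exp (C₁ * T) *
        (C₁ * (∫ s in (0 : ℝ)..T, |Z s| * |(Eε s)⁻¹ - (E₀ s)⁻¹| * Eε s)
          + C₂ * ∫ s in (0 : ℝ)..T, (1 + |Z s| * (E₀ s)⁻¹) * |Eε s - E₀ s|) := by
  intro t ht
  obtain ⟨ht0, htT⟩ := ht
  -- b is continuous (Lipschitz)
  have hb_cont : Continuous b := by
    have : LipschitzWith C₁.toNNReal b := by
      apply LipschitzWith.of_dist_le_mul
      intro u v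
      simpa [Real.dist_eq, Real.coe_toNNReal C₁ hC₁.le] using hb_lip u v
    exact this.continuous
  set I : Set ℝ := Set.Icc 0 T with hI
  have hEε_ne : ∀ s ∈ I, Eε s ≠ 0 := fun s hs => (hEε_pos s hs).ne'
  have hE₀_ne : ∀ s ∈ I, E₀ s ≠ 0 := fun s hs => (hE₀_pos s hs).ne'
  -- the two drifts
  set Gε : ℝ → ℝ := fun s => b (Zε s * (Eε s)⁻¹) * Eε s with hGε
  set G₀ : ℝ → ℝ := fun s => b (Z s * (E₀ s)⁻¹) * E₀ s with hG₀
  have hGε_cont : ContinuousOn Gε I :=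
    (hb_cont.comp_continuousOn (hZε_cont.mul (hEε_cont.inv₀ hEε_ne))).mul hEε_cont
  have hG₀_cont : ContinuousOn G₀ I :=
    (hb_cont.comp_continuousOn (hZ_cont.mul (hE₀_cont.inv₀ hE₀_ne))).mul hE₀_cont
  -- error functions
  set φ : ℝ → ℝ := fun s => C₁ * (|Z s| * |(Eε s)⁻¹ - (E₀ s)⁻¹| * Eε s)
      + C₂ * ((1 + |Z s| * (E₀ s)⁻¹) * |Eε s - E₀ s|) with hφ
  have hφ_cont : ContinuousOn φ I := by
    apply ContinuousOn.add
    · exact continuousOn_const.mul (((hZ_cont.abs.mul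
        ((hEε_cont.inv₀ hEε_ne).sub (hE₀_cont.inv₀ hE₀_ne)).abs)).mul hEε_cont)
    · exact continuousOn_const.mul ((continuousOn_const.add
        (hZ_cont.abs.mul (hE₀_cont.inv₀ hE₀_ne))).mul (hEε_cont.sub hE₀_cont).abs)
  have hφ_nonneg : ∀ s ∈ I, 0 ≤ φ s := by
    intro s hs
    have h1 : (0:ℝ) ≤ |Z s| * |(Eε s)⁻¹ - (E₀ s)⁻¹| * Eε s :=
      mul_nonneg (mul_nonneg (abs_nonneg _) (abs_nonneg _)) (hEε_pos s hs).le
    have h2 : (0:ℝ) ≤ (1 + |Z s| * (E₀ s)⁻¹) * |Eε s - E₀ s| := by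
      apply mul_nonneg _ (abs_nonneg _)
      have := mul_nonneg (abs_nonneg (Z s)) (inv_nonneg.mpr (hE₀_pos s hs).le)
      linarith
    positivity
  -- Λ
  set Λ : ℝ := C₁ * (∫ s in (0:ℝ)..T, |Z s| * |(Eε s)⁻¹ - (E₀ s)⁻¹| * Eε s)
      + C₂ * ∫ s in (0:ℝ)..T, (1 + |Z s| * (E₀ s)⁻¹) * |Eε s - E₀ s| with hΛ
  have hsubI : ∀ u ∈ I, Set.uIcc (0:ℝ) u ⊆ I := by
    intro u hu
    rw [Set.uIcc_of_le hu.1]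
    exact Set.Icc_subset_Icc le_rfl hu.2
  have hTI : T ∈ I := Set.right_mem_Icc.mpr hT.le
  have hφ_int : ∀ u ∈ I, IntervalIntegrable φ volume 0 u := fun u hu =>
    (hφ_cont.mono (hsubI u hu)).intervalIntegrable
  have hΛ_int : (∫ s in (0:ℝ)..T, φ s) = Λ := by
    rw [hΛ, hφ]
    rw [intervalIntegral.integral_add, intervalIntegral.integral_const_mul,
        intervalIntegral.integral_const_mul]
    · exact (continuousOn_const.mul (((hZ_cont.abs.mul
        ((hEε_cont.inv₀ hEε_ne).sub (hE₀_cont.inv₀ hE₀_ne)).abs)).mul hEε_cont)).mono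
        (hsubI T hTI) |>.intervalIntegrable
    · exact (continuousOn_const.mul ((continuousOn_const.add
        (hZ_cont.abs.mul (hE₀_cont.inv₀ hE₀_ne))).mul
        (hEε_cont.sub hE₀_cont).abs)).mono (hsubI T hTI) |>.intervalIntegrable
  have hΛ_nonneg : 0 ≤ Λ := by
    rw [← hΛ_int]
    exact intervalIntegral.integral_nonneg hT.le hφ_nonneg
  -- globally continuous version of |Zε - Z|
  set c : ℝ → ℝ := fun s => min (max s 0) T with hc
  have hc_cont : Continuous c := (continuous_id.max continuous_const).min continuous_const
  have hc_mem : ∀ s, c s ∈ I := by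
    intro s
    constructor
    · exact le_min (le_max_right _ _) hT.le
    · exact min_le_right _ _
  have hc_eq : ∀ s ∈ I, c s = s := by
    intro s hs
    rw [hc]
    simp only [max_eq_left hs.1, min_eq_left hs.2]
  set F : ℝ → ℝ := fun s => |Zε (c s) - Z (c s)| with hF
  have hF_cont : Continuous F :=
    ((hZε_cont.comp_continuous hc_cont hc_mem).sub
      (hZ_cont.comp_continuous hc_cont hc_mem)).abs
  have hF_eq : ∀ s ∈ I, F s = |Zε s - Z s| := by
    intro s hs; rw [hF]; simp only [hc_eq s hs]
  have hF_nonneg : ∀ s, 0 ≤ F s := fun s => abs_nonneg _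
  -- pointwise bound on the drift difference
  have hpt : ∀ s ∈ I, |Gε s - G₀ s| ≤ C₁ * F s + φ s := by
    intro s hs
    have hEεp := hEε_pos s hs
    have hE₀p := hE₀_pos s hs
    have key : Gε s - G₀ s =
        (b (Zε s * (Eε s)⁻¹) - b (Z s * (Eε s)⁻¹)) * Eε s
        + (b (Z s * (Eε s)⁻¹) - b (Z s * (E₀ s)⁻¹)) * Eε s
        + b (Z s * (E₀ s)⁻¹) * (Eε s - E₀ s) := by
      rw [hGε, hG₀]; ring
    rw [key]
    have t1 : |(b (Zε s * (Eε s)⁻¹) - b (Z s * (Eε s)⁻¹)) * Eε s| ≤ C₁ * F s := by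
      rw [abs_mul, abs_of_pos hEεp, hF_eq s hs]
      have := hb_lip (Zε s * (Eε s)⁻¹) (Z s * (Eε s)⁻¹)
      have h2 : |Zε s * (Eε s)⁻¹ - Z s * (Eε s)⁻¹| = |Zε s - Z s| * (Eε s)⁻¹ := by
        rw [← sub_mul, abs_mul, abs_of_pos (inv_pos.mpr hEεp)]
      calc |b (Zε s * (Eε s)⁻¹) - b (Z s * (Eε s)⁻¹)| * Eε s
          ≤ (C₁ * (|Zε s - Z s| * (Eε s)⁻¹)) * Eε s := by
            apply mul_le_mul_of_nonneg_right _ hEεp.le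
            rw [← h2]; exact this
        _ = C₁ * |Zε s - Z s| := by field_simp
    have t2 : |(b (Z s * (Eε s)⁻¹) - b (Z s * (E₀ s)⁻¹)) * Eε s|
        ≤ C₁ * (|Z s| * |(Eε s)⁻¹ - (E₀ s)⁻¹| * Eε s) := by
      rw [abs_mul, abs_of_pos hEεp]
      have := hb_lip (Z s * (Eε s)⁻¹) (Z s * (E₀ s)⁻¹)
      have h2 : |Z s * (Eε s)⁻¹ - Z s * (E₀ s)⁻¹| = |Z s| * |(Eε s)⁻¹ - (E₀ s)⁻¹| := by
        rw [← mul_sub, abs_mul]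
      calc |b (Z s * (Eε s)⁻¹) - b (Z s * (E₀ s)⁻¹)| * Eε s
          ≤ (C₁ * (|Z s| * |(Eε s)⁻¹ - (E₀ s)⁻¹|)) * Eε s := by
            apply mul_le_mul_of_nonneg_right _ hEεp.le
            rw [← h2]; exact this
        _ = C₁ * (|Z s| * |(Eε s)⁻¹ - (E₀ s)⁻¹| * Eε s) := by ring
    have t3 : |b (Z s * (E₀ s)⁻¹) * (Eε s - E₀ s)|
        ≤ C₂ * ((1 + |Z s| * (E₀ s)⁻¹) * |Eε s - E₀ s|) := by
      rw [abs_mul]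
      have := hb_growth (Z s * (E₀ s)⁻¹)
      have h2 : |Z s * (E₀ s)⁻¹| = |Z s| * (E₀ s)⁻¹ := by
        rw [abs_mul, abs_of_pos (inv_pos.mpr hE₀p)]
      calc |b (Z s * (E₀ s)⁻¹)| * |Eε s - E₀ s|
          ≤ (C₂ * (1 + |Z s| * (E₀ s)⁻¹)) * |Eε s - E₀ s| := by
            apply mul_le_mul_of_nonneg_right _ (abs_nonneg _)
            rw [← h2]; exact this
        _ = C₂ * ((1 + |Z s| * (E₀ s)⁻¹) * |Eε s - E₀ s|) := by ring
    rw [hφ]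
    calc |(b (Zε s * (Eε s)⁻¹) - b (Z s * (Eε s)⁻¹)) * Eε s
        + (b (Z s * (Eε s)⁻¹) - b (Z s * (E₀ s)⁻¹)) * Eε s
        + b (Z s * (E₀ s)⁻¹) * (Eε s - E₀ s)|
        ≤ |(b (Zε s * (Eε s)⁻¹) - b (Z s * (Eε s)⁻¹)) * Eε s
          + (b (Z s * (Eε s)⁻¹) - b (Z s * (E₀ s)⁻¹)) * Eε s|
          + |b (Z s * (E₀ s)⁻¹) * (Eε s - E₀ s)| := abs_add_le _ _
      _ ≤ |(b (Zε s * (Eε s)⁻¹) - b (Z s * (Eε s)⁻¹)) * Eε s|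
          + |(b (Z s * (Eε s)⁻¹) - b (Z s * (E₀ s)⁻¹)) * Eε s|
          + |b (Z s * (E₀ s)⁻¹) * (Eε s - E₀ s)| := by
            gcongr; exact abs_add_le _ _
      _ ≤ C₁ * F s + (C₁ * (|Z s| * |(Eε s)⁻¹ - (E₀ s)⁻¹| * Eε s)
          + C₂ * ((1 + |Z s| * (E₀ s)⁻¹) * |Eε s - E₀ s|)) := by
            linarith
  -- the integral inequality
  have key : ∀ u ∈ I, F u ≤ Λ + C₁ * ∫ s in (0:ℝ)..u, F s := by
    intro u hu
    have hsub := hsubI u hu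
    have hGε_int : IntervalIntegrable Gε volume 0 u :=
      (hGε_cont.mono hsub).intervalIntegrable
    have hG₀_int : IntervalIntegrable G₀ volume 0 u :=
      (hG₀_cont.mono hsub).intervalIntegrable
    have hFI_int : IntervalIntegrable F volume 0 u :=
      hF_cont.intervalIntegrable 0 u
    have habs_int : IntervalIntegrable (fun s => |Gε s - G₀ s|) volume 0 u :=
      ((hGε_cont.mono hsub).sub (hG₀_cont.mono hsub)).abs.intervalIntegrable
    have hsum_int : IntervalIntegrable (fun s => C₁ * F s + φ s) volume 0 u :=
      ((continuous_const.mul hF_cont).intervalIntegrable 0 u).add (hφ_int u hu)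
    have hdiff : Zε u - Z u = ∫ s in (0:ℝ)..u, (Gε s - G₀ s) := by
      rw [hZε u hu, hZ u hu, intervalIntegral.integral_sub hGε_int hG₀_int]
      ring
    rw [hF_eq u hu, hdiff]
    calc |∫ s in (0:ℝ)..u, (Gε s - G₀ s)|
        ≤ ∫ s in (0:ℝ)..u, |Gε s - G₀ s| :=
          intervalIntegral.abs_integral_le_integral_abs hu.1
      _ ≤ ∫ s in (0:ℝ)..u, (C₁ * F s + φ s) := by
          apply intervalIntegral.integral_mono_on hu.1 habs_int hsum_int
          intro s hs
          exact hpt s (Set.Icc_subset_Icc le_rfl hu.2 hs)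
      _ = C₁ * (∫ s in (0:ℝ)..u, F s) + ∫ s in (0:ℝ)..u, φ s := by
          rw [intervalIntegral.integral_add (f := fun s => C₁ * F s)
            ((continuous_const.mul hF_cont).intervalIntegrable 0 u) (hφ_int u hu),
            intervalIntegral.integral_const_mul]
      _ ≤ C₁ * (∫ s in (0:ℝ)..u, F s) + Λ := by
          gcongr
          have hφ_int2 : IntervalIntegrable φ volume u T := by
            apply ContinuousOn.intervalIntegrable
            apply hφ_cont.mono
            rw [Set.uIcc_of_le hu.2]
            exact Set.Icc_subset_Icc hu.1 le_rfl
          rw [← hΛ_int,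
            ← intervalIntegral.integral_add_adjacent_intervals (hφ_int u hu) hφ_int2]
          have hpos : 0 ≤ ∫ s in u..T, φ s := by
            apply intervalIntegral.integral_nonneg hu.2
            intro s hs
            exact hφ_nonneg s ⟨hu.1.trans hs.1, hs.2⟩
          linarith
      _ = Λ + C₁ * ∫ s in (0:ℝ)..u, F s := by ring
  -- Gronwall
  set g : ℝ → ℝ := fun u => Λ + C₁ * ∫ s in (0:ℝ)..u, F s with hg
  have hg_deriv : ∀ u, HasDerivAt g (C₁ * F u) u := by
    intro u
    exact ((hF_cont.integral_hasStrictDerivAt 0 u).hasDerivAt.const_mul C₁).const_add Λ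
  have hg_nonneg : ∀ u ∈ I, 0 ≤ g u := fun u hu => le_trans (hF_nonneg u) (key u hu)
  have hgron : ∀ u ∈ Set.Icc (0:ℝ) T, ‖g u‖ ≤ gronwallBound Λ C₁ 0 (u - 0) := by
    apply norm_le_gronwallBound_of_norm_deriv_right_le (f' := fun u => C₁ * F u)
    · exact fun u _ => (hg_deriv u).continuousAt.continuousWithinAt
    · exact fun u _ => (hg_deriv u).hasDerivWithinAt
    · rw [hg]
      simp only [intervalIntegral.integral_same, mul_zero, add_zero]
      rw [Real.norm_eq_abs, abs_of_nonneg hΛ_nonneg]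
    · intro u hu
      have huI : u ∈ I := ⟨hu.1, hu.2.le⟩
      rw [Real.norm_eq_abs, Real.norm_eq_abs, abs_of_nonneg (hg_nonneg u huI)]
      have h1 : C₁ * F u ≤ C₁ * g u :=
        mul_le_mul_of_nonneg_left (key u huI) hC₁.le
      rw [abs_of_nonneg (mul_nonneg hC₁.le (hF_nonneg u))]
      linarith
  have hfin : F t ≤ Λ * Real.exp (C₁ * t) := by
    have := hgron t ⟨ht0, htT⟩
    rw [gronwallBound_ε0, sub_zero] at this
    calc F t ≤ g t := key t ⟨ht0, htT⟩
      _ ≤ |g t| := le_abs_self _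
      _ = ‖g t‖ := rfl
      _ ≤ Λ * Real.exp (C₁ * t) := this
  rw [← hF_eq t ⟨ht0, htT⟩]
  calc F t ≤ Λ * Real.exp (C₁ * t) := hfin
    _ ≤ Λ * Real.exp (C₁ * T) :=
        mul_le_mul_of_nonneg_left (Real.exp_le_exp.mpr
          (mul_le_mul_of_nonneg_left htT hC₁.le)) hΛ_nonneg
    _ = Real.exp (C₁ * T) * Λ := mul_comm _ _
end
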